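/- The family of random variables {ξ̃_{α_n} : n ≥ 1} ∪ {ξ̃_{β_n} : n ≥ 1} is i.i.d., each member uniform on {1,−1}; equivalently, for any k, l ≥ 0, any distinct indices n_1,…,n_k ≥ 1 and distinct indices m_1,…,m_l ≥ 1, and any x_1,…,x_k, y_1,…,y_l ∈ {1,−1}, one has P(ξ̃_{α_{n_i}} = x_i for 1 ≤ i ≤ k and ξ̃_{β_{m_j}} = y_j for 1 ≤ j ≤ l) = 1/2^{k+l}. -/

import Mathlib

open MeasureTheory ProbabilityTheory Filter Set
open scoped Classical ENNReal

noncomputable section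

variable {Ω : Type*}

/-- `Q n = 1` if the `n`-th moves agree, `0` if they are opposite. -/
def Qproc (ξ η : ℕ → Ω → ℝ) (n : ℕ) (ω : Ω) : ℕ :=
  if ξ n ω = η n ω then 1 else 0

/-- `T n = ∑_{k=1}^n Q k`, the number of common movements up to step `n`. -/
def Tproc (ξ η : ℕ → Ω → ℝ) (n : ℕ) (ω : Ω) : ℕ :=
  ∑ k ∈ Finset.Icc 1 n, Qproc ξ η k ω

/-- `S n = n - T n`, the number of counter movements up to step `n`. -/
def Sproc (ξ η : ℕ → Ω → ℝ) (n : ℕ) (ω : Ω) : ℕ :=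
  n - Tproc ξ η n ω

/-- `α n = inf {k ≥ 1 : T k = n}`, with `inf ∅ = ⊤`, valued in `ℕ∞`. -/
def alphaProc (ξ η : ℕ → Ω → ℝ) (n : ℕ) (ω : Ω) : ℕ∞ :=
  ⨅ (k : ℕ) (_ : 1 ≤ k ∧ Tproc ξ η k ω = n), (k : ℕ∞)

/-- `β n = inf {k ≥ 1 : S k = n}`, with `inf ∅ = ⊤`, valued in `ℕ∞`. -/
def betaProc (ξ η : ℕ → Ω → ℝ) (n : ℕ) (ω : Ω) : ℕ∞ :=
  ⨅ (k : ℕ) (_ : 1 ≤ k ∧ Sproc ξ η k ω = n), (k : ℕ∞)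

/-- `ξ̃_{α n}`: equal to `ξ_i` on `{α n = i}` (`i < ∞`) and to `ζ n` on `{α n = ∞}`. -/
def xiAlpha (ξ η ζ : ℕ → Ω → ℝ) (n : ℕ) (ω : Ω) : ℝ :=
  if alphaProc ξ η n ω = ⊤ then ζ n ω else ξ (alphaProc ξ η n ω).toNat ω

/-- `ξ̃_{β m}`: equal to `ξ_i` on `{β m = i}` (`i < ∞`) and to `ψ m` on `{β m = ∞}`. -/
def xiBeta (ξ η ψ : ℕ → Ω → ℝ) (m : ℕ) (ω : Ω) : ℝ :=
  if betaProc ξ η m ω = ⊤ then ψ m ω else ξ (betaProc ξ η m ω).toNat ω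

/-- The common-movement walk `X n = ∑_{i=1}^n ξ̃_{α i}`. -/
def Xproc (ξ η ζ : ℕ → Ω → ℝ) (n : ℕ) (ω : Ω) : ℝ :=
  ∑ i ∈ Finset.Icc 1 n, xiAlpha ξ η ζ i ω

/-- The counter-movement walk `Y n = ∑_{i=1}^n ξ̃_{β i}`. -/
def Yproc (ξ η ψ : ℕ → Ω → ℝ) (n : ℕ) (ω : Ω) : ℝ :=
  ∑ i ∈ Finset.Icc 1 n, xiBeta ξ η ψ i ω


/-! ### Generic counting-process toolbox -/

def ftime (N : ℕ → Ω → ℕ) (n : ℕ) (ω : Ω) : ℕ := sInf {t | n ≤ N t ω}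

def fact (N : ℕ → Ω → ℕ) (ξ : ℕ → Ω → ℝ) (n : ℕ) (v : ℝ) (t : ℕ) (ω : Ω) : ℝ :=
  if n ≤ N t ω then (if ξ (ftime N n ω) ω = v then 2 else 0) else 1

def factInf (N : ℕ → Ω → ℕ) (ξ : ℕ → Ω → ℝ) (n : ℕ) (v : ℝ) (ω : Ω) : ℝ :=
  if ∃ t, n ≤ N t ω then (if ξ (ftime N n ω) ω = v then 2 else 0) else 1

section Counting

variable {N : ℕ → Ω → ℕ} {ξ : ℕ → Ω → ℝ}

theorem N_mono (hNstep : ∀ t ω, N (t + 1) ω = N t ω ∨ N (t + 1) ω = N t ω + 1)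
    {s t : ℕ} (h : s ≤ t) (ω : Ω) : N s ω ≤ N t ω := by
  induction t with
  | zero => simp_all
  | succ t ih =>
    rcases Nat.lt_or_ge s (t+1) with h' | h'
    · have := ih (Nat.lt_succ_iff.mp h')
      rcases hNstep t ω with h2 | h2 <;> omega
    · have : s = t + 1 := le_antisymm h h'
      simp [this]

theorem ftime_le {n t : ℕ} {ω : Ω} (h : n ≤ N t ω) : ftime N n ω ≤ t := Nat.sInf_le h

theorem ftime_mem {n t : ℕ} {ω : Ω} (h : n ≤ N t ω) : n ≤ N (ftime N n ω) ω :=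
  Nat.sInf_mem (⟨t, h⟩ : {t | n ≤ N t ω}.Nonempty)

theorem ftime_pos (hN0 : ∀ ω, N 0 ω = 0) {n t : ℕ} {ω : Ω} (hn : 1 ≤ n) (h : n ≤ N t ω) :
    1 ≤ ftime N n ω := by
  by_contra hc
  have h0 : ftime N n ω = 0 := by omega
  have h1 := ftime_mem h
  rw [h0, hN0 ω] at h1
  omega

theorem ftime_exact (hN0 : ∀ ω, N 0 ω = 0)
    (hNstep : ∀ t ω, N (t + 1) ω = N t ω ∨ N (t + 1) ω = N t ω + 1)
    {n t : ℕ} {ω : Ω} (hn : 1 ≤ n) (h : n ≤ N t ω) :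
    N (ftime N n ω) ω = n := by
  set s := ftime N n ω with hs
  have hs1 : 1 ≤ s := ftime_pos hN0 hn h
  have hmem : n ≤ N s ω := ftime_mem h
  have hnotmem : ¬ n ≤ N (s - 1) ω := fun hc => by
    have := ftime_le hc
    omega
  have hstep := hNstep (s - 1) ω
  have hs' : s - 1 + 1 = s := by omega
  rw [hs'] at hstep
  omega

theorem ftime_eq_succ (hNstep : ∀ t ω, N (t + 1) ω = N t ω ∨ N (t + 1) ω = N t ω + 1)
    {n t : ℕ} {ω : Ω} (h1 : N t ω < n) (h2 : n ≤ N (t + 1) ω) :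
    ftime N n ω = t + 1 := by
  refine le_antisymm (ftime_le h2) ?_
  by_contra hc
  have hle : ftime N n ω ≤ t := by omega
  have ha := ftime_mem h2
  have hb := N_mono hNstep hle ω
  omega

theorem cp_inf_eq_top_iff (hN0 : ∀ ω, N 0 ω = 0)
    (hNstep : ∀ t ω, N (t + 1) ω = N t ω ∨ N (t + 1) ω = N t ω + 1)
    {n : ℕ} {ω : Ω} (hn : 1 ≤ n) :
    (⨅ (k : ℕ) (_ : 1 ≤ k ∧ N k ω = n), (k : ℕ∞)) = ⊤ ↔ ¬ ∃ t, n ≤ N t ω := by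
  rw [iInf_eq_top]
  constructor
  · rintro h ⟨t, ht⟩
    have h2 := ftime_exact hN0 hNstep hn ht
    have h3 := ftime_pos hN0 hn ht
    have h4 := h (ftime N n ω)
    rw [iInf_eq_top] at h4
    exact (by simpa using h4 ⟨h3, h2⟩)
  · intro h k
    rw [iInf_eq_top]
    rintro ⟨hk1, hk2⟩
    exact (h (⟨k, le_of_eq hk2.symm⟩ : ∃ t, n ≤ N t ω)).elim

theorem cp_inf_eq_ftime (hN0 : ∀ ω, N 0 ω = 0)
    (hNstep : ∀ t ω, N (t + 1) ω = N t ω ∨ N (t + 1) ω = N t ω + 1)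
    {n : ℕ} {ω : Ω} (hn : 1 ≤ n) (h : ∃ t, n ≤ N t ω) :
    (⨅ (k : ℕ) (_ : 1 ≤ k ∧ N k ω = n), (k : ℕ∞)) = (ftime N n ω : ℕ∞) := by
  obtain ⟨t, ht⟩ := h
  refine le_antisymm ?_ ?_
  · exact iInf₂_le (ftime N n ω) ⟨ftime_pos hN0 hn ht, ftime_exact hN0 hNstep hn ht⟩
  · refine le_iInf₂ fun k hk => ?_
    have : ftime N n ω ≤ k := ftime_le (le_of_eq hk.2.symm)
    exact_mod_cast this

/-! ### `fact` step lemmas -/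

theorem fact_succ_of_eq {n : ℕ} {v : ℝ} {t : ℕ} {ω : Ω} (h : N (t + 1) ω = N t ω) :
    fact N ξ n v (t + 1) ω = fact N ξ n v t ω := by
  unfold fact; rw [h]

theorem fact_succ_of_incr_ne {n : ℕ} {v : ℝ} {t : ℕ} {ω : Ω}
    (h : N (t + 1) ω = N t ω + 1) (hne : n ≠ N t ω + 1) :
    fact N ξ n v (t + 1) ω = fact N ξ n v t ω := by
  unfold fact
  rcases Nat.lt_or_ge (N t ω) n with h1 | h1
  · rw [if_neg (show ¬ n ≤ N (t+1) ω by omega), if_neg (show ¬ n ≤ N t ω by omega)]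
  · rw [if_pos (show n ≤ N (t+1) ω by omega), if_pos (show n ≤ N t ω by omega)]

theorem fact_succ_of_incr_eq (hNstep : ∀ t ω, N (t + 1) ω = N t ω ∨ N (t + 1) ω = N t ω + 1)
    {n : ℕ} {v : ℝ} {t : ℕ} {ω : Ω}
    (h : N (t + 1) ω = N t ω + 1) (heq : n = N t ω + 1) :
    fact N ξ n v (t + 1) ω = if ξ (t + 1) ω = v then 2 else 0 := by
  unfold fact
  rw [if_pos (show n ≤ N (t+1) ω by omega),
    ftime_eq_succ hNstep (show N t ω < n by omega) (show n ≤ N (t+1) ω by omega)]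

theorem fact_of_not_reached {n : ℕ} {v : ℝ} {t : ℕ} {ω : Ω} (h : N t ω < n) :
    fact N ξ n v t ω = 1 := by
  unfold fact; rw [if_neg (by omega)]

theorem fact_nonneg (N : ℕ → Ω → ℕ) (ξ : ℕ → Ω → ℝ) (n : ℕ) (v : ℝ) (t : ℕ) (ω : Ω) :
    0 ≤ fact N ξ n v t ω := by
  unfold fact; split_ifs <;> norm_num

theorem fact_le_two (N : ℕ → Ω → ℕ) (ξ : ℕ → Ω → ℝ) (n : ℕ) (v : ℝ) (t : ℕ) (ω : Ω) :
    fact N ξ n v t ω ≤ 2 := by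
  unfold fact; split_ifs <;> norm_num

theorem factInf_nonneg (N : ℕ → Ω → ℕ) (ξ : ℕ → Ω → ℝ) (n : ℕ) (v : ℝ) (ω : Ω) :
    0 ≤ factInf N ξ n v ω := by
  unfold factInf; split_ifs <;> norm_num

theorem factInf_le_two (N : ℕ → Ω → ℕ) (ξ : ℕ → Ω → ℝ) (n : ℕ) (v : ℝ) (ω : Ω) :
    factInf N ξ n v ω ≤ 2 := by
  unfold factInf; split_ifs <;> norm_num

theorem fact_tendsto (hNstep : ∀ t ω, N (t + 1) ω = N t ω ∨ N (t + 1) ω = N t ω + 1)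
    (n : ℕ) (v : ℝ) (ω : Ω) :
    ∀ᶠ t in atTop, fact N ξ n v t ω = factInf N ξ n v ω := by
  by_cases h : ∃ t, n ≤ N t ω
  · obtain ⟨t0, ht0⟩ := h
    have hex : ∃ t, n ≤ N t ω := ⟨t0, ht0⟩
    filter_upwards [eventually_ge_atTop t0] with t ht
    have hle : n ≤ N t ω := le_trans ht0 (N_mono hNstep ht ω)
    unfold fact factInf
    rw [if_pos hle, if_pos hex]
  · filter_upwards with t
    unfold fact factInf
    rw [if_neg (fun hc => h ⟨t, hc⟩), if_neg h]

end Counting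
section Meas

variable {N : ℕ → Ω → ℕ} {ξ : ℕ → Ω → ℝ}

/-- The event "`N` first reaches `n` exactly at time `s`". -/
def Dset (N : ℕ → Ω → ℕ) (n s : ℕ) : Set Ω :=
  {ω | n ≤ N s ω} ∩ ⋂ u ∈ Finset.range s, {ω | N u ω < n}

theorem mem_Dset {n s : ℕ} {ω : Ω} :
    ω ∈ Dset N n s ↔ n ≤ N s ω ∧ ∀ u < s, N u ω < n := by
  simp [Dset, Finset.mem_range]

theorem mem_Dset_ftime {n t : ℕ} {ω : Ω} (h : n ≤ N t ω) : ω ∈ Dset N n (ftime N n ω) := by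
  rw [mem_Dset]
  refine ⟨ftime_mem h, fun u hu => ?_⟩
  by_contra hc
  have := ftime_le (show n ≤ N u ω by omega)
  omega

theorem Dset_ftime_eq {n s : ℕ} {ω : Ω} (h : ω ∈ Dset N n s) : ftime N n ω = s := by
  rw [mem_Dset] at h
  refine le_antisymm (ftime_le h.1) ?_
  by_contra hc
  have h2 := ftime_mem h.1
  have := h.2 _ (show ftime N n ω < s by omega)
  omega

variable {mΩ : MeasurableSpace Ω} {F : Filtration ℕ mΩ}

theorem measurableSet_Dset (hNmeas : ∀ t, Measurable[F t] (N t)) (n s : ℕ) :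
    MeasurableSet[F s] (Dset N n s) := by
  refine MeasurableSet.inter (hNmeas s measurableSet_Ici) ?_
  refine Finset.measurableSet_biInter _ fun u hu => ?_
  have : MeasurableSet[F u] {ω | N u ω < n} := hNmeas u measurableSet_Iio
  exact F.mono (le_of_lt (Finset.mem_range.mp hu)) _ this

theorem measurable_fact (hN0 : ∀ ω, N 0 ω = 0)
    (hNstep : ∀ t ω, N (t + 1) ω = N t ω ∨ N (t + 1) ω = N t ω + 1)
    (hNmeas : ∀ t, Measurable[F t] (N t))
    (hξm : ∀ s, 1 ≤ s → Measurable[F s] (ξ s))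
    {n : ℕ} (hn : 1 ≤ n) (v : ℝ) (t : ℕ) :
    Measurable[F t] (fact N ξ n v t) := by
  have hA : MeasurableSet[F t] (⋃ s ∈ Finset.Icc 1 t, (Dset N n s ∩ {ω | ξ s ω = v})) := by
    refine Finset.measurableSet_biUnion _ fun s hs => ?_
    rw [Finset.mem_Icc] at hs
    refine F.mono hs.2 _ (MeasurableSet.inter (measurableSet_Dset hNmeas n s) ?_)
    exact hξm s hs.1 (measurableSet_singleton v)
  have hB : MeasurableSet[F t] {ω | n ≤ N t ω} := hNmeas t measurableSet_Ici
  have heq : fact N ξ n v t = fun ω =>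
      if ω ∈ ⋃ s ∈ Finset.Icc 1 t, (Dset N n s ∩ {ω | ξ s ω = v}) then 2
      else if ω ∈ {ω | n ≤ N t ω} then 0 else 1 := by
    funext ω
    by_cases hB' : n ≤ N t ω
    · have hs0le : ftime N n ω ≤ t := ftime_le hB'
      have hs0pos : 1 ≤ ftime N n ω := ftime_pos hN0 hn hB'
      have hD : ω ∈ Dset N n (ftime N n ω) := mem_Dset_ftime hB'
      by_cases hv : ξ (ftime N n ω) ω = v
      · have hmem : ω ∈ ⋃ s ∈ Finset.Icc 1 t, (Dset N n s ∩ {ω | ξ s ω = v}) := by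
          simp only [mem_iUnion, mem_inter_iff]
          exact ⟨_, Finset.mem_Icc.mpr ⟨hs0pos, hs0le⟩, hD, hv⟩
        rw [if_pos hmem]
        simp [fact, hB', hv]
      · rw [if_neg]
        · simp [fact, mem_setOf_eq, hB', hv]
        intro hc
        simp only [Finset.mem_Icc, mem_iUnion, mem_inter_iff] at hc
        obtain ⟨s, _, hDs, hvs⟩ := hc
        simp only [mem_setOf_eq] at hvs
        rw [← Dset_ftime_eq hDs] at hvs
        exact hv hvs
    · rw [if_neg]
      · simp [fact, mem_setOf_eq, hB']
      intro hc
      simp only [Finset.mem_Icc, mem_iUnion, mem_inter_iff] at hc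
      obtain ⟨s, hs, hDs, _⟩ := hc
      have h1 := (mem_Dset.mp hDs).1
      have := N_mono hNstep hs.2 ω
      omega
  rw [heq]
  exact Measurable.ite hA measurable_const (Measurable.ite hB measurable_const measurable_const)

theorem measurableSet_reach (hNmeas : ∀ t, Measurable[F t] (N t)) (n : ℕ) :
    MeasurableSet[⨆ i, (F i : MeasurableSpace Ω)] {ω | ∃ t, n ≤ N t ω} := by
  have : {ω : Ω | ∃ t, n ≤ N t ω} = ⋃ t, {ω | n ≤ N t ω} := by ext ω; simp
  rw [this]
  refine MeasurableSet.iUnion fun t => ?_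
  exact (le_iSup (fun i => (F i : MeasurableSpace Ω)) t) _ (hNmeas t measurableSet_Ici)

theorem measurableSet_hit (hN0 : ∀ ω, N 0 ω = 0)
    (hNmeas : ∀ t, Measurable[F t] (N t))
    (hξm : ∀ s, 1 ≤ s → Measurable[F s] (ξ s))
    {n : ℕ} (hn : 1 ≤ n) (v : ℝ) :
    MeasurableSet[⨆ i, (F i : MeasurableSpace Ω)]
      {ω | (∃ t, n ≤ N t ω) ∧ ξ (ftime N n ω) ω = v} := by
  have heq : {ω | (∃ t, n ≤ N t ω) ∧ ξ (ftime N n ω) ω = v}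
      = ⋃ s, ⋃ (_ : 1 ≤ s), (Dset N n s ∩ {ω | ξ s ω = v}) := by
    ext ω
    simp only [mem_setOf_eq, mem_iUnion, mem_inter_iff]
    constructor
    · rintro ⟨⟨t, ht⟩, hv⟩
      exact ⟨ftime N n ω, ftime_pos hN0 hn ht, mem_Dset_ftime ht, hv⟩
    · rintro ⟨s, hs1, hDs, hvs⟩
      have h1 := (mem_Dset.mp hDs).1
      rw [Dset_ftime_eq hDs]
      exact ⟨⟨s, h1⟩, hvs⟩
  rw [heq]
  refine MeasurableSet.iUnion fun s => ?_
  refine MeasurableSet.iUnion fun hs => ?_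
  refine (le_iSup (fun i => (F i : MeasurableSpace Ω)) s) _ ?_
  exact (measurableSet_Dset hNmeas n s).inter (hξm s hs (measurableSet_singleton v))

end Meas

/-! ### Specialization to `Tproc` and `Sproc` -/

section TS

variable {ξ η : ℕ → Ω → ℝ}

theorem Tproc_zero (ξ η : ℕ → Ω → ℝ) (ω : Ω) : Tproc ξ η 0 ω = 0 := by simp [Tproc]

theorem Sproc_zero (ξ η : ℕ → Ω → ℝ) (ω : Ω) : Sproc ξ η 0 ω = 0 := by simp [Sproc, Tproc]

theorem Tproc_succ (ξ η : ℕ → Ω → ℝ) (t : ℕ) (ω : Ω) :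
    Tproc ξ η (t + 1) ω = Tproc ξ η t ω + Qproc ξ η (t + 1) ω := by
  unfold Tproc
  rw [← Finset.sum_Icc_succ_top (by omega : 1 ≤ t + 1)]

theorem Tproc_le (ξ η : ℕ → Ω → ℝ) (t : ℕ) (ω : Ω) : Tproc ξ η t ω ≤ t := by
  induction t with
  | zero => simp [Tproc_zero]
  | succ t ih =>
    rw [Tproc_succ]
    have : Qproc ξ η (t + 1) ω ≤ 1 := by unfold Qproc; split_ifs <;> omega
    omega

theorem TS_succ_of_eq {t : ℕ} {ω : Ω} (h : ξ (t + 1) ω = η (t + 1) ω) :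
    Tproc ξ η (t + 1) ω = Tproc ξ η t ω + 1 ∧ Sproc ξ η (t + 1) ω = Sproc ξ η t ω := by
  have hq : Qproc ξ η (t + 1) ω = 1 := by unfold Qproc; rw [if_pos h]
  have hT := Tproc_succ ξ η t ω
  have hle := Tproc_le ξ η t ω
  constructor
  · omega
  · unfold Sproc; omega

theorem TS_succ_of_ne {t : ℕ} {ω : Ω} (h : ξ (t + 1) ω ≠ η (t + 1) ω) :
    Tproc ξ η (t + 1) ω = Tproc ξ η t ω ∧ Sproc ξ η (t + 1) ω = Sproc ξ η t ω + 1 := by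
  have hq : Qproc ξ η (t + 1) ω = 0 := by unfold Qproc; rw [if_neg h]
  have hT := Tproc_succ ξ η t ω
  have hle := Tproc_le ξ η t ω
  constructor
  · omega
  · unfold Sproc; omega

theorem Tproc_step (ξ η : ℕ → Ω → ℝ) : ∀ t ω,
    Tproc ξ η (t + 1) ω = Tproc ξ η t ω ∨ Tproc ξ η (t + 1) ω = Tproc ξ η t ω + 1 := by
  intro t ω
  by_cases h : ξ (t + 1) ω = η (t + 1) ω
  · exact Or.inr (TS_succ_of_eq h).1
  · exact Or.inl (TS_succ_of_ne h).1

theorem Sproc_step (ξ η : ℕ → Ω → ℝ) : ∀ t ω,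
    Sproc ξ η (t + 1) ω = Sproc ξ η t ω ∨ Sproc ξ η (t + 1) ω = Sproc ξ η t ω + 1 := by
  intro t ω
  by_cases h : ξ (t + 1) ω = η (t + 1) ω
  · exact Or.inl (TS_succ_of_eq h).2
  · exact Or.inr (TS_succ_of_ne h).2

variable {mΩ : MeasurableSpace Ω} {F : Filtration ℕ mΩ}

theorem measurable_Tproc (hξm : ∀ n, 1 ≤ n → Measurable[F n] (ξ n))
    (hηm : ∀ n, 1 ≤ n → Measurable[F n] (η n)) (t : ℕ) :
    Measurable[F t] (Tproc ξ η t) := by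
  unfold Tproc
  refine Finset.measurable_sum _ fun k hk => ?_
  rw [Finset.mem_Icc] at hk
  have hset : MeasurableSet[F k] {ω | ξ k ω = η k ω} :=
    measurableSet_eq_fun (hξm k hk.1) (hηm k hk.1)
  have hQ : Measurable[F k] (Qproc ξ η k) := by
    unfold Qproc
    exact Measurable.ite hset measurable_const measurable_const
  exact hQ.mono (F.mono hk.2) le_rfl

theorem measurable_Sproc (hξm : ∀ n, 1 ≤ n → Measurable[F n] (ξ n))
    (hηm : ∀ n, 1 ≤ n → Measurable[F n] (η n)) (t : ℕ) :
    Measurable[F t] (Sproc ξ η t) := by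
  unfold Sproc
  exact Measurable.sub measurable_const (measurable_Tproc hξm hηm t)

end TS

/-! ### The product martingale -/

def MartA {k : ℕ} (N : ℕ → Ω → ℕ) (ξ : ℕ → Ω → ℝ) (nn : Fin k → ℕ) (x : Fin k → ℝ)
    (t : ℕ) (ω : Ω) : ℝ :=
  ∏ i, fact N ξ (nn i) (x i) t ω

def MartAInf {k : ℕ} (N : ℕ → Ω → ℕ) (ξ : ℕ → Ω → ℝ) (nn : Fin k → ℕ) (x : Fin k → ℝ)
    (ω : Ω) : ℝ :=
  ∏ i, factInf N ξ (nn i) (x i) ω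

def gstep {k : ℕ} (nn : Fin k → ℕ) (x : Fin k → ℝ) (c : ℕ) (w : ℝ) : ℝ :=
  if ∃ i, nn i = c ∧ w = x i then 2 else if ∃ i, nn i = c then 0 else 1

section MartASec

variable {k : ℕ} {N : ℕ → Ω → ℕ} {ξ : ℕ → Ω → ℝ} {nn : Fin k → ℕ} {x : Fin k → ℝ}

theorem MartA_nonneg (t : ℕ) (ω : Ω) : 0 ≤ MartA N ξ nn x t ω :=
  Finset.prod_nonneg fun i _ => fact_nonneg N ξ (nn i) (x i) t ω

theorem MartA_le (t : ℕ) (ω : Ω) : MartA N ξ nn x t ω ≤ 2 ^ k := by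
  have : MartA N ξ nn x t ω ≤ ∏ _i : Fin k, (2 : ℝ) :=
    Finset.prod_le_prod (fun i _ => fact_nonneg N ξ (nn i) (x i) t ω)
      (fun i _ => fact_le_two N ξ (nn i) (x i) t ω)
  simpa using this

theorem MartAInf_nonneg (ω : Ω) : 0 ≤ MartAInf N ξ nn x ω :=
  Finset.prod_nonneg fun i _ => factInf_nonneg N ξ (nn i) (x i) ω

theorem MartAInf_le (ω : Ω) : MartAInf N ξ nn x ω ≤ 2 ^ k := by
  have : MartAInf N ξ nn x ω ≤ ∏ _i : Fin k, (2 : ℝ) :=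
    Finset.prod_le_prod (fun i _ => factInf_nonneg N ξ (nn i) (x i) ω)
      (fun i _ => factInf_le_two N ξ (nn i) (x i) ω)
  simpa using this

theorem MartA_zero (hN0 : ∀ ω, N 0 ω = 0) (hn1 : ∀ i, 1 ≤ nn i) (ω : Ω) :
    MartA N ξ nn x 0 ω = 1 := by
  unfold MartA
  refine Finset.prod_eq_one fun i _ => ?_
  refine fact_of_not_reached ?_
  rw [hN0 ω]
  exact hn1 i

theorem MartA_succ_of_eq {t : ℕ} {ω : Ω} (h : N (t + 1) ω = N t ω) :
    MartA N ξ nn x (t + 1) ω = MartA N ξ nn x t ω :=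
  Finset.prod_congr rfl fun i _ => fact_succ_of_eq h

theorem MartA_succ_of_incr
    (hNstep : ∀ t ω, N (t + 1) ω = N t ω ∨ N (t + 1) ω = N t ω + 1)
    (hinj : Function.Injective nn)
    {t : ℕ} {ω : Ω} (h : N (t + 1) ω = N t ω + 1) :
    MartA N ξ nn x (t + 1) ω = MartA N ξ nn x t ω * gstep nn x (N t ω + 1) (ξ (t + 1) ω) := by
  by_cases hex : ∃ i, nn i = N t ω + 1
  · obtain ⟨i₀, hi₀⟩ := hex
    have hne : ∀ i, i ≠ i₀ → nn i ≠ N t ω + 1 := fun i hi hc =>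
      hi (hinj (hc.trans hi₀.symm))
    have h1 : MartA N ξ nn x (t + 1) ω
        = fact N ξ (nn i₀) (x i₀) (t + 1) ω * ∏ i ∈ Finset.univ.erase i₀, fact N ξ (nn i) (x i) t ω := by
      rw [MartA, ← Finset.mul_prod_erase Finset.univ _ (Finset.mem_univ i₀)]
      congr 1
      refine Finset.prod_congr rfl fun i hi => ?_
      exact fact_succ_of_incr_ne h (hne i (Finset.mem_erase.mp hi).1)
    have h2 : MartA N ξ nn x t ω = ∏ i ∈ Finset.univ.erase i₀, fact N ξ (nn i) (x i) t ω := by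
      rw [MartA, ← Finset.mul_prod_erase Finset.univ _ (Finset.mem_univ i₀),
        fact_of_not_reached (show N t ω < nn i₀ by omega), one_mul]
    have h3 : fact N ξ (nn i₀) (x i₀) (t + 1) ω = gstep nn x (N t ω + 1) (ξ (t + 1) ω) := by
      rw [fact_succ_of_incr_eq hNstep h hi₀, gstep]
      by_cases hv : ξ (t + 1) ω = x i₀
      · rw [if_pos hv, if_pos ⟨i₀, hi₀, hv⟩]
      · rw [if_neg hv, if_neg, if_pos ⟨i₀, hi₀⟩]
        rintro ⟨i, hi, hvi⟩
        have : i = i₀ := hinj (hi.trans hi₀.symm)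
        exact hv (by rw [← this]; exact hvi)
    rw [h1, h2, h3, mul_comm]
  · have hg : gstep nn x (N t ω + 1) (ξ (t + 1) ω) = 1 := by
      rw [gstep, if_neg, if_neg hex]
      rintro ⟨i, hi, _⟩
      exact hex ⟨i, hi⟩
    rw [hg, mul_one]
    refine Finset.prod_congr rfl fun i _ => ?_
    exact fact_succ_of_incr_ne h (fun hc => hex ⟨i, hc⟩)

theorem gstep_nonneg (c : ℕ) (w : ℝ) : 0 ≤ gstep nn x c w := by
  unfold gstep; split_ifs <;> norm_num

theorem gstep_le_two (c : ℕ) (w : ℝ) : gstep nn x c w ≤ 2 := by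
  unfold gstep; split_ifs <;> norm_num

theorem gstep_add (hinj : Function.Injective nn) (hx : ∀ i, x i = 1 ∨ x i = -1) (c : ℕ) :
    gstep nn x c 1 + gstep nn x c (-1) = 2 := by
  unfold gstep
  by_cases hex : ∃ i, nn i = c
  · obtain ⟨i₀, hi₀⟩ := hex
    have huniq : ∀ i, nn i = c → i = i₀ := fun i hi => hinj (hi.trans hi₀.symm)
    rcases hx i₀ with hv | hv
    · rw [if_pos ⟨i₀, hi₀, hv.symm⟩, if_neg, if_pos ⟨i₀, hi₀⟩]
      · norm_num
      rintro ⟨i, hi, hvi⟩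
      rw [huniq i hi] at hvi
      rw [hv] at hvi
      norm_num at hvi
    · have hno : ¬ ∃ i, nn i = c ∧ (1 : ℝ) = x i := by
        rintro ⟨i, hi, hvi⟩
        rw [huniq i hi, hv] at hvi
        norm_num at hvi
      rw [if_neg hno, if_pos ⟨i₀, hi₀⟩, if_pos ⟨i₀, hi₀, hv.symm⟩]
      norm_num
  · have h1 : ¬ ∃ i, nn i = c ∧ (1 : ℝ) = x i := fun h => hex ⟨h.choose, h.choose_spec.1⟩
    have h2 : ¬ ∃ i, nn i = c ∧ (-1 : ℝ) = x i := fun h => hex ⟨h.choose, h.choose_spec.1⟩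
    rw [if_neg h1, if_neg h2, if_neg hex]
    norm_num

theorem MartA_tendsto
    (hNstep : ∀ t ω, N (t + 1) ω = N t ω ∨ N (t + 1) ω = N t ω + 1) (ω : Ω) :
    ∀ᶠ t in atTop, MartA N ξ nn x t ω = MartAInf N ξ nn x ω := by
  have h : ∀ᶠ t in atTop, ∀ i : Fin k, fact N ξ (nn i) (x i) t ω = factInf N ξ (nn i) (x i) ω :=
    eventually_all.mpr fun i => fact_tendsto hNstep (nn i) (x i) ω
  filter_upwards [h] with t ht
  exact Finset.prod_congr rfl fun i _ => ht i

variable {mΩ : MeasurableSpace Ω} {F : Filtration ℕ mΩ}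

theorem measurable_MartA (hN0 : ∀ ω, N 0 ω = 0)
    (hNstep : ∀ t ω, N (t + 1) ω = N t ω ∨ N (t + 1) ω = N t ω + 1)
    (hNmeas : ∀ t, Measurable[F t] (N t))
    (hξm : ∀ s, 1 ≤ s → Measurable[F s] (ξ s))
    (hn1 : ∀ i, 1 ≤ nn i) (t : ℕ) :
    Measurable[F t] (MartA N ξ nn x t) := by
  unfold MartA
  exact Finset.measurable_prod _ fun i _ =>
    measurable_fact hN0 hNstep hNmeas hξm (hn1 i) (x i) t

theorem measurable_gstep (hNmeas : ∀ t, Measurable[F t] (N t)) (t : ℕ) (w : ℝ) :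
    Measurable[F t] (fun ω => gstep nn x (N t ω + 1) w) := by
  have h1 : Measurable[F t] (fun ω => N t ω + 1) := (hNmeas t).add measurable_const
  exact (measurable_from_top (f := fun c => gstep nn x c w)).comp h1

end MartASec

/-! ### Integration toolbox -/

def chi (f : Ω → ℝ) (c : ℝ) (ω : Ω) : ℝ := if f ω = c then 1 else 0

theorem chi_nonneg (f : Ω → ℝ) (c : ℝ) (ω : Ω) : 0 ≤ chi f c ω := by
  unfold chi; split_ifs <;> norm_num

theorem chi_le_one (f : Ω → ℝ) (c : ℝ) (ω : Ω) : chi f c ω ≤ 1 := by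
  unfold chi; split_ifs <;> norm_num

theorem measurable_chi {mΩ : MeasurableSpace Ω} {f : Ω → ℝ} (hf : Measurable f) (c : ℝ) :
    Measurable (chi f c) := by
  unfold chi
  exact Measurable.ite (hf (measurableSet_singleton c)) measurable_const measurable_const

theorem integrable_of_bound {mΩ : MeasurableSpace Ω} {P : Measure Ω} [IsFiniteMeasure P]
    {f : Ω → ℝ} (hf : Measurable f) (C : ℝ) (h : ∀ ω, |f ω| ≤ C) : Integrable f P :=
  Integrable.mono' (integrable_const C) hf.aestronglyMeasurable
    (Filter.Eventually.of_forall fun ω => h ω)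

theorem bnd4 {h g u v A B : ℝ} (h0 : 0 ≤ h) (hA : h ≤ A) (g0 : 0 ≤ g) (gB : g ≤ B)
    (u0 : 0 ≤ u) (u1 : u ≤ 1) (v0 : 0 ≤ v) (v1 : v ≤ 1) (A0 : 0 ≤ A) :
    |h * g * (u * v)| ≤ A * B := by
  rw [abs_of_nonneg (by positivity)]
  have huv : u * v ≤ 1 := mul_le_one₀ u1 v0 v1
  calc h * g * (u * v) ≤ h * g := mul_le_of_le_one_right (by positivity) huv
    _ ≤ A * B := mul_le_mul hA gB g0 A0

theorem half_int {mΩ : MeasurableSpace Ω} (P : Measure Ω) [IsProbabilityMeasure P]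
    (F : Filtration ℕ mΩ) {t : ℕ} {f : Ω → ℝ} {c : ℝ} (hfm : Measurable f)
    (hcond : P[({ω | f ω = c}).indicator (fun _ => (1 : ℝ)) | F t] =ᵐ[P] fun _ => 1 / 2)
    {φ : Ω → ℝ} (hφ : Measurable[F t] φ) (C : ℝ) (hbd : ∀ ω, |φ ω| ≤ C) :
    ∫ ω, φ ω * chi f c ω ∂P = (∫ ω, φ ω ∂P) / 2 := by
  have hS : MeasurableSet {ω | f ω = c} := hfm (measurableSet_singleton c)
  set g := ({ω | f ω = c}).indicator (fun _ => (1 : ℝ)) with hgdef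
  have hg_eq : (fun ω => φ ω * chi f c ω) = φ * g := by
    funext ω
    simp only [Pi.mul_apply, hgdef, indicator_apply, chi, mem_setOf_eq]
  have hφa : Measurable φ := hφ.mono (F.le t) le_rfl
  have hgm : Measurable g := measurable_const.indicator hS
  have hgi : Integrable g P := (integrable_const (1 : ℝ)).indicator hS
  have hg_bd : ∀ ω, |g ω| ≤ 1 := by
    intro ω
    simp only [hgdef, indicator_apply]
    split_ifs <;> norm_num
  have hint : Integrable (φ * g) P := by
    refine integrable_of_bound (hφa.mul hgm) (C * 1) fun ω => ?_
    rw [Pi.mul_apply, abs_mul]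
    exact mul_le_mul (hbd ω) (hg_bd ω) (abs_nonneg _) ((abs_nonneg _).trans (hbd ω))
  have h2 : P[φ * g | F t] =ᵐ[P] φ * P[g | F t] :=
    condExp_mul_of_stronglyMeasurable_left hφ.stronglyMeasurable hint hgi
  have h3 : φ * P[g | F t] =ᵐ[P] fun ω => φ ω * (1 / 2) := by
    filter_upwards [hcond] with ω hω
    rw [Pi.mul_apply, hω]
  calc ∫ ω, φ ω * chi f c ω ∂P = ∫ ω, (φ * g) ω ∂P := by rw [hg_eq]
    _ = ∫ ω, (P[φ * g | F t]) ω ∂P := (integral_condExp (F.le t)).symm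
    _ = ∫ ω, φ ω * (1 / 2) ∂P := integral_congr_ae (h2.trans h3)
    _ = (∫ ω, φ ω ∂P) * (1 / 2) := integral_mul_const _ _
    _ = (∫ ω, φ ω ∂P) / 2 := by ring

/-! ### The martingale step -/

theorem Mart_step {mΩ : MeasurableSpace Ω} (P : Measure Ω) [IsProbabilityMeasure P]
    (F : Filtration ℕ mΩ)
    (ξ η : ℕ → Ω → ℝ)
    (hξm : ∀ n, 1 ≤ n → Measurable[F n] (ξ n))
    (hηm : ∀ n, 1 ≤ n → Measurable[F n] (η n))
    (hξv : ∀ n ω, ξ n ω = 1 ∨ ξ n ω = -1)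
    (hηv : ∀ n ω, η n ω = 1 ∨ η n ω = -1)
    (hhalf : ∀ n, 1 ≤ n →
      (P[({ω | ξ n ω = 1}).indicator (fun _ => (1 : ℝ)) | F (n - 1)] =ᵐ[P] fun _ => 1 / 2) ∧
      (P[({ω | ξ n ω = -1}).indicator (fun _ => (1 : ℝ)) | F (n - 1)] =ᵐ[P] fun _ => 1 / 2) ∧
      (P[({ω | η n ω = 1}).indicator (fun _ => (1 : ℝ)) | F (n - 1)] =ᵐ[P] fun _ => 1 / 2) ∧
      (P[({ω | η n ω = -1}).indicator (fun _ => (1 : ℝ)) | F (n - 1)] =ᵐ[P] fun _ => 1 / 2))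
    {k l : ℕ} {nn : Fin k → ℕ} {mm : Fin l → ℕ} {x : Fin k → ℝ} {y : Fin l → ℝ}
    (hnn1 : ∀ i, 1 ≤ nn i) (hmm1 : ∀ j, 1 ≤ mm j)
    (hnninj : Function.Injective nn) (hmminj : Function.Injective mm)
    (hx : ∀ i, x i = 1 ∨ x i = -1) (hy : ∀ j, y j = 1 ∨ y j = -1) (t : ℕ) :
    ∫ ω, MartA (Tproc ξ η) ξ nn x (t + 1) ω * MartA (Sproc ξ η) ξ mm y (t + 1) ω ∂P
      = ∫ ω, MartA (Tproc ξ η) ξ nn x t ω * MartA (Sproc ξ η) ξ mm y t ω ∂P := by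
  -- abbreviations
  have hTmeas : ∀ s, Measurable[F s] (Tproc ξ η s) := measurable_Tproc hξm hηm
  have hSmeas : ∀ s, Measurable[F s] (Sproc ξ η s) := measurable_Sproc hξm hηm
  set h : Ω → ℝ := fun ω => MartA (Tproc ξ η) ξ nn x t ω * MartA (Sproc ξ η) ξ mm y t ω
    with hh_def
  set gA1 : Ω → ℝ := fun ω => gstep nn x (Tproc ξ η t ω + 1) 1 with hgA1_def
  set gA2 : Ω → ℝ := fun ω => gstep nn x (Tproc ξ η t ω + 1) (-1) with hgA2_def
  set gB1 : Ω → ℝ := fun ω => gstep mm y (Sproc ξ η t ω + 1) 1 with hgB1_def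
  set gB2 : Ω → ℝ := fun ω => gstep mm y (Sproc ξ η t ω + 1) (-1) with hgB2_def
  set χa1 : Ω → ℝ := chi (ξ (t + 1)) 1 with hχa1_def
  set χam : Ω → ℝ := chi (ξ (t + 1)) (-1) with hχam_def
  set χb1 : Ω → ℝ := chi (η (t + 1)) 1 with hχb1_def
  set χbm : Ω → ℝ := chi (η (t + 1)) (-1) with hχbm_def
  set C0 : ℝ := 2 ^ k * 2 ^ l with hC0_def
  have hC0 : (0:ℝ) ≤ C0 := by positivity
  -- measurability
  have hHm : Measurable[F t] h :=
    (measurable_MartA (Tproc_zero ξ η) (Tproc_step ξ η) hTmeas hξm hnn1 t).mul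
      (measurable_MartA (Sproc_zero ξ η) (Sproc_step ξ η) hSmeas hξm hmm1 t)
  have hgA1m : Measurable[F t] gA1 := measurable_gstep hTmeas t 1
  have hgA2m : Measurable[F t] gA2 := measurable_gstep hTmeas t (-1)
  have hgB1m : Measurable[F t] gB1 := measurable_gstep hSmeas t 1
  have hgB2m : Measurable[F t] gB2 := measurable_gstep hSmeas t (-1)
  have hξa : Measurable (ξ (t + 1)) := (hξm (t + 1) (by omega)).mono (F.le (t + 1)) le_rfl
  have hηa : Measurable (η (t + 1)) := (hηm (t + 1) (by omega)).mono (F.le (t + 1)) le_rfl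
  have hχa1m : Measurable χa1 := measurable_chi hξa 1
  have hχamm : Measurable χam := measurable_chi hξa (-1)
  have hχb1m : Measurable χb1 := measurable_chi hηa 1
  have hχbmm : Measurable χbm := measurable_chi hηa (-1)
  -- bounds
  have hH0 : ∀ ω, 0 ≤ h ω := fun ω => mul_nonneg (MartA_nonneg t ω) (MartA_nonneg t ω)
  have hHle : ∀ ω, h ω ≤ C0 := fun ω =>
    mul_le_mul (MartA_le t ω) (MartA_le t ω) (MartA_nonneg t ω) (by positivity)
  have hHbd : ∀ ω, |h ω| ≤ C0 := fun ω => by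
    rw [abs_of_nonneg (hH0 ω)]; exact hHle ω
  -- conditional-half facts specialized to `t+1`
  have hhalf' := hhalf (t + 1) (by omega)
  rw [Nat.add_sub_cancel] at hhalf'
  -- integral of φ against single indicators
  have int_a1 : ∀ (φ : Ω → ℝ), Measurable[F t] φ → ∀ C, (∀ ω, |φ ω| ≤ C) →
      ∫ ω, φ ω * χa1 ω ∂P = (∫ ω, φ ω ∂P) / 2 := fun φ hφ C hbd =>
    half_int P F hξa hhalf'.1 hφ C hbd
  have int_am : ∀ (φ : Ω → ℝ), Measurable[F t] φ → ∀ C, (∀ ω, |φ ω| ≤ C) →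
      ∫ ω, φ ω * χam ω ∂P = (∫ ω, φ ω ∂P) / 2 := fun φ hφ C hbd =>
    half_int P F hξa hhalf'.2.1 hφ C hbd
  have int_b1 : ∀ (φ : Ω → ℝ), Measurable[F t] φ → ∀ C, (∀ ω, |φ ω| ≤ C) →
      ∫ ω, φ ω * χb1 ω ∂P = (∫ ω, φ ω ∂P) / 2 := fun φ hφ C hbd =>
    half_int P F hηa hhalf'.2.2.1 hφ C hbd
  have int_bm : ∀ (φ : Ω → ℝ), Measurable[F t] φ → ∀ C, (∀ ω, |φ ω| ≤ C) →
      ∫ ω, φ ω * χbm ω ∂P = (∫ ω, φ ω ∂P) / 2 := fun φ hφ C hbd =>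
    half_int P F hηa hhalf'.2.2.2 hφ C hbd
  -- helper bounds
  have bnd1 : ∀ (p u C : ℝ), |p| ≤ C → 0 ≤ u → u ≤ 1 → |p * u| ≤ C := by
    intro p u C hp u0 u1
    rw [abs_mul]
    calc |p| * |u| ≤ C * 1 :=
          mul_le_mul hp (by rw [abs_of_nonneg u0]; exact u1) (abs_nonneg _)
            ((abs_nonneg p).trans hp)
      _ = C := mul_one C
  have bnd2 : ∀ (p u v C : ℝ), |p| ≤ C → 0 ≤ u → u ≤ 1 → 0 ≤ v → v ≤ 1 → |p * (u * v)| ≤ C := by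
    intro p u v C hp u0 u1 v0 v1
    exact bnd1 p (u * v) C hp (by positivity) (mul_le_one₀ u1 v0 v1)
  -- diagonal swap identity
  have key_diag : ∀ (φ : Ω → ℝ), Measurable[F t] φ → ∀ C, (∀ ω, |φ ω| ≤ C) →
      ∫ ω, φ ω * (χa1 ω * χb1 ω) ∂P = ∫ ω, φ ω * (χam ω * χbm ω) ∂P := by
    intro φ hφ C hbd
    have hφa : Measurable φ := hφ.mono (F.le t) le_rfl
    have hptw : ∀ ω, φ ω * (χa1 ω * χb1 ω)
        = φ ω * (χam ω * χbm ω) + (φ ω * χa1 ω - φ ω * χbm ω) := by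
      intro ω
      rcases hξv (t + 1) ω with ha | ha <;> rcases hηv (t + 1) ω with hb | hb <;>
        · simp only [hχa1_def, hχam_def, hχb1_def, hχbm_def, chi, ha, hb]
          norm_num
    have hI1 : Integrable (fun ω => φ ω * (χam ω * χbm ω)) P :=
      integrable_of_bound (hφa.mul (hχamm.mul hχbmm)) C fun ω =>
        bnd2 _ _ _ _ (hbd ω) (chi_nonneg _ _ ω) (chi_le_one _ _ ω) (chi_nonneg _ _ ω)
          (chi_le_one _ _ ω)
    have hI2 : Integrable (fun ω => φ ω * χa1 ω) P :=
      integrable_of_bound (hφa.mul hχa1m) C fun ω =>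
        bnd1 _ _ _ (hbd ω) (chi_nonneg _ _ ω) (chi_le_one _ _ ω)
    have hI3 : Integrable (fun ω => φ ω * χbm ω) P :=
      integrable_of_bound (hφa.mul hχbmm) C fun ω =>
        bnd1 _ _ _ (hbd ω) (chi_nonneg _ _ ω) (chi_le_one _ _ ω)
    calc ∫ ω, φ ω * (χa1 ω * χb1 ω) ∂P
        = ∫ ω, (φ ω * (χam ω * χbm ω) + (φ ω * χa1 ω - φ ω * χbm ω)) ∂P :=
          integral_congr_ae (Filter.Eventually.of_forall hptw)
      _ = (∫ ω, φ ω * (χam ω * χbm ω) ∂P) + ∫ ω, (φ ω * χa1 ω - φ ω * χbm ω) ∂P :=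
          integral_add hI1 (hI2.sub hI3)
      _ = (∫ ω, φ ω * (χam ω * χbm ω) ∂P) + ((∫ ω, φ ω * χa1 ω ∂P) - ∫ ω, φ ω * χbm ω ∂P) := by
          rw [integral_sub hI2 hI3]
      _ = ∫ ω, φ ω * (χam ω * χbm ω) ∂P := by
          rw [int_a1 φ hφ C hbd, int_bm φ hφ C hbd]; ring
  -- off-diagonal swap identity
  have key_off : ∀ (φ : Ω → ℝ), Measurable[F t] φ → ∀ C, (∀ ω, |φ ω| ≤ C) →
      ∫ ω, φ ω * (χa1 ω * χbm ω) ∂P = ∫ ω, φ ω * (χam ω * χb1 ω) ∂P := by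
    intro φ hφ C hbd
    have hφa : Measurable φ := hφ.mono (F.le t) le_rfl
    have hptw : ∀ ω, φ ω * (χa1 ω * χbm ω)
        = φ ω * (χam ω * χb1 ω) + (φ ω * χa1 ω - φ ω * χb1 ω) := by
      intro ω
      rcases hξv (t + 1) ω with ha | ha <;> rcases hηv (t + 1) ω with hb | hb <;>
        · simp only [hχa1_def, hχam_def, hχb1_def, hχbm_def, chi, ha, hb]
          norm_num
    have hI1 : Integrable (fun ω => φ ω * (χam ω * χb1 ω)) P :=
      integrable_of_bound (hφa.mul (hχamm.mul hχb1m)) C fun ω =>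
        bnd2 _ _ _ _ (hbd ω) (chi_nonneg _ _ ω) (chi_le_one _ _ ω) (chi_nonneg _ _ ω)
          (chi_le_one _ _ ω)
    have hI2 : Integrable (fun ω => φ ω * χa1 ω) P :=
      integrable_of_bound (hφa.mul hχa1m) C fun ω =>
        bnd1 _ _ _ (hbd ω) (chi_nonneg _ _ ω) (chi_le_one _ _ ω)
    have hI3 : Integrable (fun ω => φ ω * χb1 ω) P :=
      integrable_of_bound (hφa.mul hχb1m) C fun ω =>
        bnd1 _ _ _ (hbd ω) (chi_nonneg _ _ ω) (chi_le_one _ _ ω)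
    calc ∫ ω, φ ω * (χa1 ω * χbm ω) ∂P
        = ∫ ω, (φ ω * (χam ω * χb1 ω) + (φ ω * χa1 ω - φ ω * χb1 ω)) ∂P :=
          integral_congr_ae (Filter.Eventually.of_forall hptw)
      _ = (∫ ω, φ ω * (χam ω * χb1 ω) ∂P) + ∫ ω, (φ ω * χa1 ω - φ ω * χb1 ω) ∂P :=
          integral_add hI1 (hI2.sub hI3)
      _ = (∫ ω, φ ω * (χam ω * χb1 ω) ∂P) + ((∫ ω, φ ω * χa1 ω ∂P) - ∫ ω, φ ω * χb1 ω ∂P) := by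
          rw [integral_sub hI2 hI3]
      _ = ∫ ω, φ ω * (χam ω * χb1 ω) ∂P := by
          rw [int_a1 φ hφ C hbd, int_b1 φ hφ C hbd]; ring
  -- pointwise decomposition of the next step
  have hdecomp : ∀ ω, MartA (Tproc ξ η) ξ nn x (t + 1) ω * MartA (Sproc ξ η) ξ mm y (t + 1) ω
      = h ω * gA1 ω * (χa1 ω * χb1 ω) + h ω * gA2 ω * (χam ω * χbm ω)
        + h ω * gB1 ω * (χa1 ω * χbm ω) + h ω * gB2 ω * (χam ω * χb1 ω) := by
    intro ω
    rcases hξv (t + 1) ω with ha | ha <;> rcases hηv (t + 1) ω with hb | hb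
    · have heq : ξ (t + 1) ω = η (t + 1) ω := by rw [ha, hb]
      obtain ⟨hT', hS'⟩ := TS_succ_of_eq heq
      rw [MartA_succ_of_incr (Tproc_step ξ η) hnninj hT', MartA_succ_of_eq hS']
      simp only [hh_def, hgA1_def, hgA2_def, hgB1_def, hgB2_def, hχa1_def, hχam_def,
        hχb1_def, hχbm_def, chi, ha, hb]
      norm_num
      ring
    · have hne : ξ (t + 1) ω ≠ η (t + 1) ω := by rw [ha, hb]; norm_num
      obtain ⟨hT', hS'⟩ := TS_succ_of_ne hne
      rw [MartA_succ_of_eq hT', MartA_succ_of_incr (Sproc_step ξ η) hmminj hS']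
      simp only [hh_def, hgA1_def, hgA2_def, hgB1_def, hgB2_def, hχa1_def, hχam_def,
        hχb1_def, hχbm_def, chi, ha, hb]
      norm_num
      ring
    · have hne : ξ (t + 1) ω ≠ η (t + 1) ω := by rw [ha, hb]; norm_num
      obtain ⟨hT', hS'⟩ := TS_succ_of_ne hne
      rw [MartA_succ_of_eq hT', MartA_succ_of_incr (Sproc_step ξ η) hmminj hS']
      simp only [hh_def, hgA1_def, hgA2_def, hgB1_def, hgB2_def, hχa1_def, hχam_def,
        hχb1_def, hχbm_def, chi, ha, hb]
      norm_num
      ring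
    · have heq : ξ (t + 1) ω = η (t + 1) ω := by rw [ha, hb]
      obtain ⟨hT', hS'⟩ := TS_succ_of_eq heq
      rw [MartA_succ_of_incr (Tproc_step ξ η) hnninj hT', MartA_succ_of_eq hS']
      simp only [hh_def, hgA1_def, hgA2_def, hgB1_def, hgB2_def, hχa1_def, hχam_def,
        hχb1_def, hχbm_def, chi, ha, hb]
      norm_num
      ring
  -- ambient measurability
  have hHa : Measurable h := hHm.mono (F.le t) le_rfl
  have hgA1a : Measurable gA1 := hgA1m.mono (F.le t) le_rfl
  have hgA2a : Measurable gA2 := hgA2m.mono (F.le t) le_rfl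
  have hgB1a : Measurable gB1 := hgB1m.mono (F.le t) le_rfl
  have hgB2a : Measurable gB2 := hgB2m.mono (F.le t) le_rfl
  have hgA1_0 : ∀ ω, 0 ≤ gA1 ω := fun ω => by simp only [hgA1_def]; exact gstep_nonneg _ _
  have hgA2_0 : ∀ ω, 0 ≤ gA2 ω := fun ω => by simp only [hgA2_def]; exact gstep_nonneg _ _
  have hgB1_0 : ∀ ω, 0 ≤ gB1 ω := fun ω => by simp only [hgB1_def]; exact gstep_nonneg _ _
  have hgB2_0 : ∀ ω, 0 ≤ gB2 ω := fun ω => by simp only [hgB2_def]; exact gstep_nonneg _ _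
  have hgA1_2 : ∀ ω, gA1 ω ≤ 2 := fun ω => by simp only [hgA1_def]; exact gstep_le_two _ _
  have hgA2_2 : ∀ ω, gA2 ω ≤ 2 := fun ω => by simp only [hgA2_def]; exact gstep_le_two _ _
  have hgB1_2 : ∀ ω, gB1 ω ≤ 2 := fun ω => by simp only [hgB1_def]; exact gstep_le_two _ _
  have hgB2_2 : ∀ ω, gB2 ω ≤ 2 := fun ω => by simp only [hgB2_def]; exact gstep_le_two _ _
  have hφ1bd : ∀ ω, |h ω * gA1 ω| ≤ C0 * 2 := fun ω => by
    rw [abs_of_nonneg (mul_nonneg (hH0 ω) (hgA1_0 ω))]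
    exact mul_le_mul (hHle ω) (hgA1_2 ω) (hgA1_0 ω) hC0
  have hφ2bd : ∀ ω, |h ω * gA2 ω| ≤ C0 * 2 := fun ω => by
    rw [abs_of_nonneg (mul_nonneg (hH0 ω) (hgA2_0 ω))]
    exact mul_le_mul (hHle ω) (hgA2_2 ω) (hgA2_0 ω) hC0
  have hφ3bd : ∀ ω, |h ω * gB1 ω| ≤ C0 * 2 := fun ω => by
    rw [abs_of_nonneg (mul_nonneg (hH0 ω) (hgB1_0 ω))]
    exact mul_le_mul (hHle ω) (hgB1_2 ω) (hgB1_0 ω) hC0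
  have hφ4bd : ∀ ω, |h ω * gB2 ω| ≤ C0 * 2 := fun ω => by
    rw [abs_of_nonneg (mul_nonneg (hH0 ω) (hgB2_0 ω))]
    exact mul_le_mul (hHle ω) (hgB2_2 ω) (hgB2_0 ω) hC0
  -- integrability of all terms
  have hIt1 : Integrable (fun ω => h ω * gA1 ω * (χa1 ω * χb1 ω)) P :=
    integrable_of_bound ((hHa.mul hgA1a).mul (hχa1m.mul hχb1m)) (C0 * 2) fun ω =>
      bnd2 _ _ _ _ (hφ1bd ω) (chi_nonneg _ _ ω) (chi_le_one _ _ ω) (chi_nonneg _ _ ω)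
        (chi_le_one _ _ ω)
  have hIt1' : Integrable (fun ω => h ω * gA1 ω * (χam ω * χbm ω)) P :=
    integrable_of_bound ((hHa.mul hgA1a).mul (hχamm.mul hχbmm)) (C0 * 2) fun ω =>
      bnd2 _ _ _ _ (hφ1bd ω) (chi_nonneg _ _ ω) (chi_le_one _ _ ω) (chi_nonneg _ _ ω)
        (chi_le_one _ _ ω)
  have hIt2 : Integrable (fun ω => h ω * gA2 ω * (χam ω * χbm ω)) P :=
    integrable_of_bound ((hHa.mul hgA2a).mul (hχamm.mul hχbmm)) (C0 * 2) fun ω =>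
      bnd2 _ _ _ _ (hφ2bd ω) (chi_nonneg _ _ ω) (chi_le_one _ _ ω) (chi_nonneg _ _ ω)
        (chi_le_one _ _ ω)
  have hIt3 : Integrable (fun ω => h ω * gB1 ω * (χa1 ω * χbm ω)) P :=
    integrable_of_bound ((hHa.mul hgB1a).mul (hχa1m.mul hχbmm)) (C0 * 2) fun ω =>
      bnd2 _ _ _ _ (hφ3bd ω) (chi_nonneg _ _ ω) (chi_le_one _ _ ω) (chi_nonneg _ _ ω)
        (chi_le_one _ _ ω)
  have hIt3' : Integrable (fun ω => h ω * gB1 ω * (χam ω * χb1 ω)) P :=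
    integrable_of_bound ((hHa.mul hgB1a).mul (hχamm.mul hχb1m)) (C0 * 2) fun ω =>
      bnd2 _ _ _ _ (hφ3bd ω) (chi_nonneg _ _ ω) (chi_le_one _ _ ω) (chi_nonneg _ _ ω)
        (chi_le_one _ _ ω)
  have hIt4 : Integrable (fun ω => h ω * gB2 ω * (χam ω * χb1 ω)) P :=
    integrable_of_bound ((hHa.mul hgB2a).mul (hχamm.mul hχb1m)) (C0 * 2) fun ω =>
      bnd2 _ _ _ _ (hφ4bd ω) (chi_nonneg _ _ ω) (chi_le_one _ _ ω) (chi_nonneg _ _ ω)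
        (chi_le_one _ _ ω)
  have hI2h1 : Integrable (fun ω => 2 * h ω * (χam ω * χbm ω)) P :=
    integrable_of_bound ((measurable_const.mul hHa).mul (hχamm.mul hχbmm)) (2 * C0) fun ω =>
      bnd2 _ _ _ _ (by
          rw [abs_of_nonneg (mul_nonneg (by norm_num) (hH0 ω))]; linarith [hHle ω])
        (chi_nonneg _ _ ω) (chi_le_one _ _ ω) (chi_nonneg _ _ ω) (chi_le_one _ _ ω)
  have hI2h2 : Integrable (fun ω => 2 * h ω * (χam ω * χb1 ω)) P :=
    integrable_of_bound ((measurable_const.mul hHa).mul (hχamm.mul hχb1m)) (2 * C0) fun ω =>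
      bnd2 _ _ _ _ (by
          rw [abs_of_nonneg (mul_nonneg (by norm_num) (hH0 ω))]; linarith [hHle ω])
        (chi_nonneg _ _ ω) (chi_le_one _ _ ω) (chi_nonneg _ _ ω) (chi_le_one _ _ ω)
  -- combine
  have e1 : ∫ ω, h ω * gA1 ω * (χa1 ω * χb1 ω) ∂P = ∫ ω, h ω * gA1 ω * (χam ω * χbm ω) ∂P :=
    key_diag (fun ω => h ω * gA1 ω) (hHm.mul hgA1m) (C0 * 2) hφ1bd
  have e3 : ∫ ω, h ω * gB1 ω * (χa1 ω * χbm ω) ∂P = ∫ ω, h ω * gB1 ω * (χam ω * χb1 ω) ∂P :=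
    key_off (fun ω => h ω * gB1 ω) (hHm.mul hgB1m) (C0 * 2) hφ3bd
  have e12 : (∫ ω, h ω * gA1 ω * (χa1 ω * χb1 ω) ∂P) + ∫ ω, h ω * gA2 ω * (χam ω * χbm ω) ∂P
      = ∫ ω, 2 * h ω * (χam ω * χbm ω) ∂P := by
    rw [e1, ← integral_add hIt1' hIt2]
    refine integral_congr_ae (Filter.Eventually.of_forall fun ω => ?_)
    have hsum : gA1 ω + gA2 ω = 2 := by
      simp only [hgA1_def, hgA2_def]
      exact gstep_add hnninj hx (Tproc ξ η t ω + 1)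
    linear_combination (h ω * (χam ω * χbm ω)) * hsum
  have e34 : (∫ ω, h ω * gB1 ω * (χa1 ω * χbm ω) ∂P) + ∫ ω, h ω * gB2 ω * (χam ω * χb1 ω) ∂P
      = ∫ ω, 2 * h ω * (χam ω * χb1 ω) ∂P := by
    rw [e3, ← integral_add hIt3' hIt4]
    refine integral_congr_ae (Filter.Eventually.of_forall fun ω => ?_)
    have hsum : gB1 ω + gB2 ω = 2 := by
      simp only [hgB1_def, hgB2_def]
      exact gstep_add hmminj hy (Sproc ξ η t ω + 1)
    linear_combination (h ω * (χam ω * χb1 ω)) * hsum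
  have efin : (∫ ω, 2 * h ω * (χam ω * χbm ω) ∂P) + ∫ ω, 2 * h ω * (χam ω * χb1 ω) ∂P
      = ∫ ω, h ω ∂P := by
    rw [← integral_add hI2h1 hI2h2]
    have hptw : ∀ ω, 2 * h ω * (χam ω * χbm ω) + 2 * h ω * (χam ω * χb1 ω)
        = (2 * h ω) * χam ω := by
      intro ω
      have hbsum : χbm ω + χb1 ω = 1 := by
        rcases hηv (t + 1) ω with hb | hb <;>
          · simp only [hχb1_def, hχbm_def, chi, hb]
            norm_num
      linear_combination (2 * h ω * χam ω) * hbsum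
    rw [integral_congr_ae (Filter.Eventually.of_forall hptw)]
    have h2int := int_am (fun ω => 2 * h ω) (measurable_const.mul hHm) (2 * C0)
      (fun ω => by
        rw [abs_of_nonneg (mul_nonneg (by norm_num) (hH0 ω))]; linarith [hHle ω])
    rw [h2int, integral_const_mul]
    ring
  calc ∫ ω, MartA (Tproc ξ η) ξ nn x (t + 1) ω * MartA (Sproc ξ η) ξ mm y (t + 1) ω ∂P
      = ∫ ω, (h ω * gA1 ω * (χa1 ω * χb1 ω) + h ω * gA2 ω * (χam ω * χbm ω)
          + h ω * gB1 ω * (χa1 ω * χbm ω) + h ω * gB2 ω * (χam ω * χb1 ω)) ∂P :=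
        integral_congr_ae (Filter.Eventually.of_forall hdecomp)
    _ = (∫ ω, h ω * gA1 ω * (χa1 ω * χb1 ω) ∂P) + (∫ ω, h ω * gA2 ω * (χam ω * χbm ω) ∂P)
          + (∫ ω, h ω * gB1 ω * (χa1 ω * χbm ω) ∂P) + ∫ ω, h ω * gB2 ω * (χam ω * χb1 ω) ∂P := by
        have s12 : ∫ ω, (h ω * gA1 ω * (χa1 ω * χb1 ω) + h ω * gA2 ω * (χam ω * χbm ω)) ∂P
            = (∫ ω, h ω * gA1 ω * (χa1 ω * χb1 ω) ∂P)
              + ∫ ω, h ω * gA2 ω * (χam ω * χbm ω) ∂P :=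
          integral_add hIt1 hIt2
        have s123 : ∫ ω, (h ω * gA1 ω * (χa1 ω * χb1 ω) + h ω * gA2 ω * (χam ω * χbm ω)
              + h ω * gB1 ω * (χa1 ω * χbm ω)) ∂P
            = (∫ ω, (h ω * gA1 ω * (χa1 ω * χb1 ω) + h ω * gA2 ω * (χam ω * χbm ω)) ∂P)
              + ∫ ω, h ω * gB1 ω * (χa1 ω * χbm ω) ∂P :=
          integral_add (hIt1.add hIt2) hIt3
        have s1234 : ∫ ω, (h ω * gA1 ω * (χa1 ω * χb1 ω) + h ω * gA2 ω * (χam ω * χbm ω)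
              + h ω * gB1 ω * (χa1 ω * χbm ω) + h ω * gB2 ω * (χam ω * χb1 ω)) ∂P
            = (∫ ω, (h ω * gA1 ω * (χa1 ω * χb1 ω) + h ω * gA2 ω * (χam ω * χbm ω)
              + h ω * gB1 ω * (χa1 ω * χbm ω)) ∂P)
              + ∫ ω, h ω * gB2 ω * (χam ω * χb1 ω) ∂P :=
          integral_add ((hIt1.add hIt2).add hIt3) hIt4
        rw [s1234, s123, s12]
    _ = (∫ ω, 2 * h ω * (χam ω * χbm ω) ∂P) + ∫ ω, 2 * h ω * (χam ω * χb1 ω) ∂P := by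
        rw [← e12, ← e34]; ring
    _ = ∫ ω, h ω ∂P := efin

/-! ### Expectation one at every time, and in the limit -/

theorem Mart_int_one {mΩ : MeasurableSpace Ω} (P : Measure Ω) [IsProbabilityMeasure P]
    (F : Filtration ℕ mΩ)
    (ξ η : ℕ → Ω → ℝ)
    (hξm : ∀ n, 1 ≤ n → Measurable[F n] (ξ n))
    (hηm : ∀ n, 1 ≤ n → Measurable[F n] (η n))
    (hξv : ∀ n ω, ξ n ω = 1 ∨ ξ n ω = -1)
    (hηv : ∀ n ω, η n ω = 1 ∨ η n ω = -1)
    (hhalf : ∀ n, 1 ≤ n →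
      (P[({ω | ξ n ω = 1}).indicator (fun _ => (1 : ℝ)) | F (n - 1)] =ᵐ[P] fun _ => 1 / 2) ∧
      (P[({ω | ξ n ω = -1}).indicator (fun _ => (1 : ℝ)) | F (n - 1)] =ᵐ[P] fun _ => 1 / 2) ∧
      (P[({ω | η n ω = 1}).indicator (fun _ => (1 : ℝ)) | F (n - 1)] =ᵐ[P] fun _ => 1 / 2) ∧
      (P[({ω | η n ω = -1}).indicator (fun _ => (1 : ℝ)) | F (n - 1)] =ᵐ[P] fun _ => 1 / 2))
    {k l : ℕ} {nn : Fin k → ℕ} {mm : Fin l → ℕ} {x : Fin k → ℝ} {y : Fin l → ℝ}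
    (hnn1 : ∀ i, 1 ≤ nn i) (hmm1 : ∀ j, 1 ≤ mm j)
    (hnninj : Function.Injective nn) (hmminj : Function.Injective mm)
    (hx : ∀ i, x i = 1 ∨ x i = -1) (hy : ∀ j, y j = 1 ∨ y j = -1) :
    ∀ t, ∫ ω, MartA (Tproc ξ η) ξ nn x t ω * MartA (Sproc ξ η) ξ mm y t ω ∂P = 1 := by
  intro t
  induction t with
  | zero =>
    have : (fun ω => MartA (Tproc ξ η) ξ nn x 0 ω * MartA (Sproc ξ η) ξ mm y 0 ω)
        = fun _ => (1 : ℝ) := by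
      funext ω
      rw [MartA_zero (Tproc_zero ξ η) hnn1 ω, MartA_zero (Sproc_zero ξ η) hmm1 ω, mul_one]
    rw [this]
    simp
  | succ t ih =>
    rw [Mart_step P F ξ η hξm hηm hξv hηv hhalf hnn1 hmm1 hnninj hmminj hx hy t]
    exact ih

theorem MartInf_int_one {mΩ : MeasurableSpace Ω} (P : Measure Ω) [IsProbabilityMeasure P]
    (F : Filtration ℕ mΩ)
    (ξ η : ℕ → Ω → ℝ)
    (hξm : ∀ n, 1 ≤ n → Measurable[F n] (ξ n))
    (hηm : ∀ n, 1 ≤ n → Measurable[F n] (η n))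
    (hξv : ∀ n ω, ξ n ω = 1 ∨ ξ n ω = -1)
    (hηv : ∀ n ω, η n ω = 1 ∨ η n ω = -1)
    (hhalf : ∀ n, 1 ≤ n →
      (P[({ω | ξ n ω = 1}).indicator (fun _ => (1 : ℝ)) | F (n - 1)] =ᵐ[P] fun _ => 1 / 2) ∧
      (P[({ω | ξ n ω = -1}).indicator (fun _ => (1 : ℝ)) | F (n - 1)] =ᵐ[P] fun _ => 1 / 2) ∧
      (P[({ω | η n ω = 1}).indicator (fun _ => (1 : ℝ)) | F (n - 1)] =ᵐ[P] fun _ => 1 / 2) ∧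
      (P[({ω | η n ω = -1}).indicator (fun _ => (1 : ℝ)) | F (n - 1)] =ᵐ[P] fun _ => 1 / 2))
    {k l : ℕ} {nn : Fin k → ℕ} {mm : Fin l → ℕ} {x : Fin k → ℝ} {y : Fin l → ℝ}
    (hnn1 : ∀ i, 1 ≤ nn i) (hmm1 : ∀ j, 1 ≤ mm j)
    (hnninj : Function.Injective nn) (hmminj : Function.Injective mm)
    (hx : ∀ i, x i = 1 ∨ x i = -1) (hy : ∀ j, y j = 1 ∨ y j = -1) :
    ∫ ω, MartAInf (Tproc ξ η) ξ nn x ω * MartAInf (Sproc ξ η) ξ mm y ω ∂P = 1 := by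
  have hTmeas : ∀ s, Measurable[F s] (Tproc ξ η s) := measurable_Tproc hξm hηm
  have hSmeas : ∀ s, Measurable[F s] (Sproc ξ η s) := measurable_Sproc hξm hηm
  have hmeas : ∀ t : ℕ, AEStronglyMeasurable
      (fun ω => MartA (Tproc ξ η) ξ nn x t ω * MartA (Sproc ξ η) ξ mm y t ω) P := by
    intro t
    have : Measurable (fun ω => MartA (Tproc ξ η) ξ nn x t ω * MartA (Sproc ξ η) ξ mm y t ω) :=
      ((measurable_MartA (Tproc_zero ξ η) (Tproc_step ξ η) hTmeas hξm hnn1 t).mul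
        (measurable_MartA (Sproc_zero ξ η) (Sproc_step ξ η) hSmeas hξm hmm1 t)).mono
        (F.le t) le_rfl
    exact this.aestronglyMeasurable
  have h_bound : ∀ t : ℕ, ∀ᵐ ω ∂P,
      ‖MartA (Tproc ξ η) ξ nn x t ω * MartA (Sproc ξ η) ξ mm y t ω‖ ≤ (2:ℝ) ^ k * 2 ^ l := by
    intro t
    refine Filter.Eventually.of_forall fun ω => ?_
    rw [Real.norm_eq_abs, abs_of_nonneg (mul_nonneg (MartA_nonneg t ω) (MartA_nonneg t ω))]
    exact mul_le_mul (MartA_le t ω) (MartA_le t ω) (MartA_nonneg t ω) (by positivity)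
  have h_lim : ∀ᵐ ω ∂P, Tendsto
      (fun t => MartA (Tproc ξ η) ξ nn x t ω * MartA (Sproc ξ η) ξ mm y t ω) atTop
      (nhds (MartAInf (Tproc ξ η) ξ nn x ω * MartAInf (Sproc ξ η) ξ mm y ω)) := by
    refine Filter.Eventually.of_forall fun ω => ?_
    have hev : ∀ᶠ t in atTop,
        MartA (Tproc ξ η) ξ nn x t ω * MartA (Sproc ξ η) ξ mm y t ω
          = MartAInf (Tproc ξ η) ξ nn x ω * MartAInf (Sproc ξ η) ξ mm y ω := by
      filter_upwards [MartA_tendsto (nn := nn) (x := x) (ξ := ξ) (Tproc_step ξ η) ω,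
        MartA_tendsto (nn := mm) (x := y) (ξ := ξ) (Sproc_step ξ η) ω] with t h1 h2
      rw [h1, h2]
    exact Tendsto.congr' (EventuallyEq.symm hev) tendsto_const_nhds
  have hconv := tendsto_integral_of_dominated_convergence (fun _ => (2:ℝ) ^ k * 2 ^ l)
    hmeas (integrable_const _) h_bound h_lim
  have hconst : (fun t => ∫ ω, MartA (Tproc ξ η) ξ nn x t ω * MartA (Sproc ξ η) ξ mm y t ω ∂P)
      = fun _ => (1:ℝ) := funext fun t =>
    Mart_int_one P F ξ η hξm hηm hξv hηv hhalf hnn1 hmm1 hnninj hmminj hx hy t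
  rw [hconst] at hconv
  exact (tendsto_nhds_unique hconv tendsto_const_nhds)

/-! ### Independence glue -/

theorem indep_glue {mΩ : MeasurableSpace Ω} (P : Measure Ω) [IsProbabilityMeasure P]
    (F : Filtration ℕ mΩ) (ζ ψ : ℕ → Ω → ℝ)
    (hindep : iIndep (fun i : ℕ ⊕ ℕ ⊕ Unit =>
      Sum.elim (fun n => MeasurableSpace.comap (ζ n) inferInstance)
        (Sum.elim (fun n => MeasurableSpace.comap (ψ n) inferInstance)
          (fun _ => ⨆ n, (F n : MeasurableSpace Ω))) i) P)
    (u v : ℕ → Set Ω)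
    (hu : ∀ n, MeasurableSet[MeasurableSpace.comap (ζ n) inferInstance] (u n))
    (hv : ∀ n, MeasurableSet[MeasurableSpace.comap (ψ n) inferInstance] (v n))
    {D : Set Ω} (hD : MeasurableSet[⨆ n, (F n : MeasurableSpace Ω)] D)
    (A B : Finset ℕ) :
    P (D ∩ ((⋂ n ∈ A, u n) ∩ (⋂ n ∈ B, v n)))
      = P D * ((∏ n ∈ A, P (u n)) * ∏ n ∈ B, P (v n)) := by
  classical
  set s : ℕ ⊕ ℕ ⊕ Unit → Set Ω :=
    Sum.elim u (Sum.elim v (fun _ => D)) with hs_def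
  set S : Finset (ℕ ⊕ ℕ ⊕ Unit) :=
    A.image Sum.inl ∪ B.image (fun n => Sum.inr (Sum.inl n)) ∪ {Sum.inr (Sum.inr ())} with hS_def
  have hmeas : ∀ a ∈ S, MeasurableSet[Sum.elim (fun n => MeasurableSpace.comap (ζ n) inferInstance)
        (Sum.elim (fun n => MeasurableSpace.comap (ψ n) inferInstance)
          (fun _ => ⨆ n, (F n : MeasurableSpace Ω))) a] (s a) := by
    rintro (n | n | u') _
    · exact hu n
    · exact hv n
    · exact hD
  have hkey := hindep.meas_biInter hmeas
  have hinter : (⋂ a ∈ S, s a) = D ∩ ((⋂ n ∈ A, u n) ∩ (⋂ n ∈ B, v n)) := by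
    ext ω
    simp only [hS_def, hs_def, Finset.mem_union, Finset.mem_image, Finset.mem_singleton,
      mem_iInter, mem_inter_iff]
    constructor
    · intro hall
      refine ⟨hall _ (Or.inr rfl), fun n hn => hall _ (Or.inl (Or.inl ⟨n, hn, rfl⟩)),
        fun n hn => hall _ (Or.inl (Or.inr ⟨n, hn, rfl⟩))⟩
    · rintro ⟨hDm, hA, hB⟩ a ha
      rcases ha with (⟨n, hn, rfl⟩ | ⟨n, hn, rfl⟩) | rfl
      · exact hA n hn
      · exact hB n hn
      · exact hDm
  have hdisj1 : Disjoint (A.image (Sum.inl : ℕ → ℕ ⊕ ℕ ⊕ Unit))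
      (B.image (fun n => Sum.inr (Sum.inl n))) := by
    rw [Finset.disjoint_left]
    rintro a ha hb
    simp only [Finset.mem_image] at ha hb
    obtain ⟨n, _, rfl⟩ := ha
    obtain ⟨n', _, h⟩ := hb
    exact nomatch h
  have hdisj2 : Disjoint (A.image (Sum.inl : ℕ → ℕ ⊕ ℕ ⊕ Unit)
        ∪ B.image (fun n => Sum.inr (Sum.inl n)))
      ({Sum.inr (Sum.inr ())} : Finset (ℕ ⊕ ℕ ⊕ Unit)) := by
    rw [Finset.disjoint_right]
    rintro a ha hb
    rw [Finset.mem_singleton] at ha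
    subst ha
    rcases Finset.mem_union.mp hb with h | h <;> simp only [Finset.mem_image] at h
    · obtain ⟨n, _, h⟩ := h
      exact nomatch h
    · obtain ⟨n, _, h⟩ := h
      have := Sum.inr.inj h
      exact nomatch this
  have hprod : ∏ a ∈ S, P (s a) = ((∏ n ∈ A, P (u n)) * ∏ n ∈ B, P (v n)) * P D := by
    rw [hS_def, Finset.prod_union hdisj2, Finset.prod_union hdisj1]
    rw [Finset.prod_image (fun a _ b _ h => Sum.inl.inj h),
      Finset.prod_image (fun a _ b _ h => Sum.inl.inj (Sum.inr.inj h))]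
    simp [hs_def]
  rw [hinter] at hkey
  rw [hkey, hprod]
  ring

/-! ### Pattern sets -/

def patSet (N : ℕ → Ω → ℕ) (ξ : ℕ → Ω → ℝ) {k : ℕ} (nn : Fin k → ℕ) (x : Fin k → ℝ)
    (I : Finset (Fin k)) : Set Ω :=
  {ω | ∀ i, (i ∈ I → ¬ ∃ t, nn i ≤ N t ω)
    ∧ (i ∉ I → (∃ t, nn i ≤ N t ω) ∧ ξ (ftime N (nn i) ω) ω = x i)}

section PatSet

variable {N : ℕ → Ω → ℕ} {ξ : ℕ → Ω → ℝ} {k : ℕ} {nn : Fin k → ℕ} {x : Fin k → ℝ}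

theorem patSet_pattern {I : Finset (Fin k)} {ω : Ω} (h : ω ∈ patSet N ξ nn x I) :
    ∀ i, i ∈ I ↔ ¬ ∃ t, nn i ≤ N t ω := by
  intro i
  constructor
  · exact (h i).1
  · intro hni
    by_contra hc
    exact hni ((h i).2 hc).1

theorem patSet_unique {I I' : Finset (Fin k)} {ω : Ω} (h : ω ∈ patSet N ξ nn x I)
    (h' : ω ∈ patSet N ξ nn x I') : I = I' := by
  ext i
  rw [patSet_pattern h i, patSet_pattern h' i]

variable {mΩ : MeasurableSpace Ω} {F : Filtration ℕ mΩ}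

theorem measurableSet_patSet (hN0 : ∀ ω, N 0 ω = 0)
    (hNmeas : ∀ t, Measurable[F t] (N t))
    (hξm : ∀ s, 1 ≤ s → Measurable[F s] (ξ s))
    (hn1 : ∀ i, 1 ≤ nn i) (I : Finset (Fin k)) :
    MeasurableSet[⨆ i, (F i : MeasurableSpace Ω)] (patSet N ξ nn x I) := by
  have heq : patSet N ξ nn x I = ⋂ i, {ω | (i ∈ I → ¬ ∃ t, nn i ≤ N t ω)
      ∧ (i ∉ I → (∃ t, nn i ≤ N t ω) ∧ ξ (ftime N (nn i) ω) ω = x i)} := by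
    ext ω; simp [patSet, mem_iInter]
  rw [heq]
  refine MeasurableSet.iInter fun i => ?_
  by_cases hi : i ∈ I
  · have : {ω | (i ∈ I → ¬ ∃ t, nn i ≤ N t ω)
        ∧ (i ∉ I → (∃ t, nn i ≤ N t ω) ∧ ξ (ftime N (nn i) ω) ω = x i)}
        = {ω | ∃ t, nn i ≤ N t ω}ᶜ := by
      ext ω; simp [hi]
    rw [this]
    exact (measurableSet_reach hNmeas (nn i)).compl
  · have : {ω | (i ∈ I → ¬ ∃ t, nn i ≤ N t ω)
        ∧ (i ∉ I → (∃ t, nn i ≤ N t ω) ∧ ξ (ftime N (nn i) ω) ω = x i)}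
        = {ω | (∃ t, nn i ≤ N t ω) ∧ ξ (ftime N (nn i) ω) ω = x i} := by
      ext ω; simp [hi]
    rw [this]
    exact measurableSet_hit hN0 hNmeas hξm (hn1 i) (x i)

theorem MartAInf_eq_sum (hN0 : ∀ ω, N 0 ω = 0) (ω : Ω) :
    MartAInf N ξ nn x ω
      = ∑ I : Finset (Fin k),
          (patSet N ξ nn x I).indicator (fun _ => (2:ℝ) ^ (k - I.card)) ω := by
  classical
  set I₀ : Finset (Fin k) := Finset.univ.filter (fun i => ¬ ∃ t, nn i ≤ N t ω) with hI₀
  have hmemI₀ : ∀ i, i ∈ I₀ ↔ ¬ ∃ t, nn i ≤ N t ω := by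
    intro i; simp [hI₀]
  have hcard : I₀.card + (Finset.univ.filter (fun i => ∃ t, nn i ≤ N t ω)).card = k := by
    have h1 := Finset.card_filter_add_card_filter_not
      (s := (Finset.univ : Finset (Fin k))) (p := fun i => ¬ ∃ t, nn i ≤ N t ω)
    simp only [Finset.card_univ, Fintype.card_fin, not_not] at h1
    exact h1
  by_cases hsat : ∀ i, i ∉ I₀ → ξ (ftime N (nn i) ω) ω = x i
  · have hω : ω ∈ patSet N ξ nn x I₀ := by
      intro i
      refine ⟨fun hi => (hmemI₀ i).mp hi, fun hi => ⟨?_, hsat i hi⟩⟩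
      by_contra hc
      exact hi ((hmemI₀ i).mpr hc)
    rw [Finset.sum_eq_single I₀]
    · rw [indicator_of_mem hω]
      unfold MartAInf
      rw [← Finset.prod_filter_mul_prod_filter_not Finset.univ
        (fun i => ¬ ∃ t, nn i ≤ N t ω) (fun i => factInf N ξ (nn i) (x i) ω)]
      have h1 : ∏ i ∈ Finset.univ.filter (fun i => ¬ ∃ t, nn i ≤ N t ω),
          factInf N ξ (nn i) (x i) ω = 1 := by
        refine Finset.prod_eq_one fun i hi => ?_
        rw [Finset.mem_filter] at hi
        unfold factInf
        rw [if_neg hi.2]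
      have h2 : ∏ i ∈ Finset.univ.filter (fun i => ¬ ¬ ∃ t, nn i ≤ N t ω),
          factInf N ξ (nn i) (x i) ω = (2:ℝ) ^ (k - I₀.card) := by
        have hfe : Finset.univ.filter (fun i => ¬ ¬ ∃ t, nn i ≤ N t ω)
            = Finset.univ.filter (fun i => ∃ t, nn i ≤ N t ω) := by
          apply Finset.filter_congr
          intro i _
          simp [not_not]
        rw [hfe]
        have hval : ∀ i ∈ Finset.univ.filter (fun i => ∃ t, nn i ≤ N t ω),
            factInf N ξ (nn i) (x i) ω = 2 := by
          intro i hi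
          rw [Finset.mem_filter] at hi
          unfold factInf
          rw [if_pos hi.2, if_pos]
          apply hsat
          rw [hmemI₀ i]
          exact not_not_intro hi.2
        rw [Finset.prod_congr rfl hval, Finset.prod_const]
        congr 1
        omega
      rw [h1, h2, one_mul]
    · intro I _ hne
      refine indicator_of_notMem (fun hc => hne (patSet_unique hc hω)) _
    · intro hc
      exact absurd (Finset.mem_univ I₀) hc
  · push_neg at hsat
    obtain ⟨i₀, hi₀notin, hi₀ne⟩ := hsat
    have hex : ∃ t, nn i₀ ≤ N t ω := by
      by_contra hc
      exact hi₀notin ((hmemI₀ i₀).mpr hc)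
    have hzero : MartAInf N ξ nn x ω = 0 := by
      unfold MartAInf
      refine Finset.prod_eq_zero (Finset.mem_univ i₀) ?_
      unfold factInf
      rw [if_pos hex, if_neg hi₀ne]
    rw [hzero]
    symm
    refine Finset.sum_eq_zero fun I _ => ?_
    refine indicator_of_notMem (fun hc => ?_) _
    by_cases hi : i₀ ∈ I
    · exact ((hc i₀).1 hi) hex
    · exact hi₀ne ((hc i₀).2 hi).2

end PatSet

/-! ### The key sum identity -/

theorem sum_PD_one {mΩ : MeasurableSpace Ω} (P : Measure Ω) [IsProbabilityMeasure P]
    (F : Filtration ℕ mΩ)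
    (ξ η : ℕ → Ω → ℝ)
    (hξm : ∀ n, 1 ≤ n → Measurable[F n] (ξ n))
    (hηm : ∀ n, 1 ≤ n → Measurable[F n] (η n))
    (hξv : ∀ n ω, ξ n ω = 1 ∨ ξ n ω = -1)
    (hηv : ∀ n ω, η n ω = 1 ∨ η n ω = -1)
    (hhalf : ∀ n, 1 ≤ n →
      (P[({ω | ξ n ω = 1}).indicator (fun _ => (1 : ℝ)) | F (n - 1)] =ᵐ[P] fun _ => 1 / 2) ∧
      (P[({ω | ξ n ω = -1}).indicator (fun _ => (1 : ℝ)) | F (n - 1)] =ᵐ[P] fun _ => 1 / 2) ∧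
      (P[({ω | η n ω = 1}).indicator (fun _ => (1 : ℝ)) | F (n - 1)] =ᵐ[P] fun _ => 1 / 2) ∧
      (P[({ω | η n ω = -1}).indicator (fun _ => (1 : ℝ)) | F (n - 1)] =ᵐ[P] fun _ => 1 / 2))
    {k l : ℕ} {nn : Fin k → ℕ} {mm : Fin l → ℕ} {x : Fin k → ℝ} {y : Fin l → ℝ}
    (hnn1 : ∀ i, 1 ≤ nn i) (hmm1 : ∀ j, 1 ≤ mm j)
    (hnninj : Function.Injective nn) (hmminj : Function.Injective mm)
    (hx : ∀ i, x i = 1 ∨ x i = -1) (hy : ∀ j, y j = 1 ∨ y j = -1) :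
    ∑ I : Finset (Fin k), ∑ J : Finset (Fin l),
      ((2:ℝ) ^ (k - I.card) * 2 ^ (l - J.card))
        * (P (patSet (Tproc ξ η) ξ nn x I ∩ patSet (Sproc ξ η) ξ mm y J)).toReal = 1 := by
  classical
  have hTmeas : ∀ s, Measurable[F s] (Tproc ξ η s) := measurable_Tproc hξm hηm
  have hSmeas : ∀ s, Measurable[F s] (Sproc ξ η s) := measurable_Sproc hξm hηm
  have hsuple : (⨆ i, (F i : MeasurableSpace Ω)) ≤ mΩ := iSup_le fun i => F.le i
  have hDmeas : ∀ (I : Finset (Fin k)) (J : Finset (Fin l)),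
      MeasurableSet (patSet (Tproc ξ η) ξ nn x I ∩ patSet (Sproc ξ η) ξ mm y J) := by
    intro I J
    refine MeasurableSet.inter ?_ ?_
    · exact hsuple _ (measurableSet_patSet (Tproc_zero ξ η) hTmeas hξm hnn1 I)
    · exact hsuple _ (measurableSet_patSet (Sproc_zero ξ η) hSmeas hξm hmm1 J)
  have hptw : ∀ ω, MartAInf (Tproc ξ η) ξ nn x ω * MartAInf (Sproc ξ η) ξ mm y ω
      = ∑ I : Finset (Fin k), ∑ J : Finset (Fin l),
          (patSet (Tproc ξ η) ξ nn x I ∩ patSet (Sproc ξ η) ξ mm y J).indicator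
            (fun _ => (2:ℝ) ^ (k - I.card) * 2 ^ (l - J.card)) ω := by
    intro ω
    rw [MartAInf_eq_sum (Tproc_zero ξ η) ω, MartAInf_eq_sum (Sproc_zero ξ η) ω,
      Finset.sum_mul_sum]
    refine Finset.sum_congr rfl fun I _ => Finset.sum_congr rfl fun J _ => ?_
    by_cases hA : ω ∈ patSet (Tproc ξ η) ξ nn x I <;>
      by_cases hB : ω ∈ patSet (Sproc ξ η) ξ mm y J <;>
      simp [indicator_apply, hA, hB]
  have hint : ∀ (I : Finset (Fin k)) (J : Finset (Fin l)),
      Integrable ((patSet (Tproc ξ η) ξ nn x I ∩ patSet (Sproc ξ η) ξ mm y J).indicator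
        (fun _ => (2:ℝ) ^ (k - I.card) * 2 ^ (l - J.card))) P := fun I J =>
    (integrable_const _).indicator (hDmeas I J)
  have h1 := MartInf_int_one P F ξ η hξm hηm hξv hηv hhalf hnn1 hmm1 hnninj hmminj hx hy
  rw [integral_congr_ae (Filter.Eventually.of_forall hptw)] at h1
  rw [integral_finset_sum _ (fun I _ => integrable_finset_sum _ (fun J _ => hint I J))] at h1
  have h2 : ∀ I : Finset (Fin k),
      ∫ ω, (∑ J : Finset (Fin l),
        (patSet (Tproc ξ η) ξ nn x I ∩ patSet (Sproc ξ η) ξ mm y J).indicator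
          (fun _ => (2:ℝ) ^ (k - I.card) * 2 ^ (l - J.card)) ω) ∂P
      = ∑ J : Finset (Fin l),
          ((2:ℝ) ^ (k - I.card) * 2 ^ (l - J.card))
            * (P (patSet (Tproc ξ η) ξ nn x I ∩ patSet (Sproc ξ η) ξ mm y J)).toReal := by
    intro I
    rw [integral_finset_sum _ (fun J _ => hint I J)]
    refine Finset.sum_congr rfl fun J _ => ?_
    rw [integral_indicator_const _ (hDmeas I J), smul_eq_mul, mul_comm, measureReal_def]
  rw [Finset.sum_congr rfl (fun I _ => h2 I)] at h1
  exact h1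

/-! ### `xiAlpha` and `xiBeta` via `ftime` -/

theorem xiAlpha_of_inf {ξ η ζ : ℕ → Ω → ℝ} {n : ℕ} (hn : 1 ≤ n) {ω : Ω}
    (h : ¬ ∃ t, n ≤ Tproc ξ η t ω) : xiAlpha ξ η ζ n ω = ζ n ω := by
  have htop : alphaProc ξ η n ω = ⊤ := by
    unfold alphaProc
    exact (cp_inf_eq_top_iff (Tproc_zero ξ η) (Tproc_step ξ η) hn).mpr h
  unfold xiAlpha
  rw [if_pos htop]

theorem xiAlpha_of_fin {ξ η ζ : ℕ → Ω → ℝ} {n : ℕ} (hn : 1 ≤ n) {ω : Ω}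
    (h : ∃ t, n ≤ Tproc ξ η t ω) :
    xiAlpha ξ η ζ n ω = ξ (ftime (Tproc ξ η) n ω) ω := by
  have heq : alphaProc ξ η n ω = (ftime (Tproc ξ η) n ω : ℕ∞) := by
    unfold alphaProc
    exact cp_inf_eq_ftime (Tproc_zero ξ η) (Tproc_step ξ η) hn h
  unfold xiAlpha
  rw [if_neg (by rw [heq]; exact ENat.coe_ne_top _), heq]
  simp

theorem xiBeta_of_inf {ξ η ψ : ℕ → Ω → ℝ} {n : ℕ} (hn : 1 ≤ n) {ω : Ω}
    (h : ¬ ∃ t, n ≤ Sproc ξ η t ω) : xiBeta ξ η ψ n ω = ψ n ω := by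
  have htop : betaProc ξ η n ω = ⊤ := by
    unfold betaProc
    exact (cp_inf_eq_top_iff (Sproc_zero ξ η) (Sproc_step ξ η) hn).mpr h
  unfold xiBeta
  rw [if_pos htop]

theorem xiBeta_of_fin {ξ η ψ : ℕ → Ω → ℝ} {n : ℕ} (hn : 1 ≤ n) {ω : Ω}
    (h : ∃ t, n ≤ Sproc ξ η t ω) :
    xiBeta ξ η ψ n ω = ξ (ftime (Sproc ξ η) n ω) ω := by
  have heq : betaProc ξ η n ω = (ftime (Sproc ξ η) n ω : ℕ∞) := by
    unfold betaProc
    exact cp_inf_eq_ftime (Sproc_zero ξ η) (Sproc_step ξ η) hn h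
  unfold xiBeta
  rw [if_neg (by rw [heq]; exact ENat.coe_ne_top _), heq]
  simp

theorem stmt_8
    {Ω : Type*} [mΩ : MeasurableSpace Ω] (P : Measure Ω) [IsProbabilityMeasure P]
    (F : MeasureTheory.Filtration ℕ mΩ) (hF0 : F 0 = ⊥)
    (ξ η : ℕ → Ω → ℝ)
    (hξm : ∀ n, 1 ≤ n → Measurable[F n] (ξ n))
    (hηm : ∀ n, 1 ≤ n → Measurable[F n] (η n))
    (hξv : ∀ n ω, ξ n ω = 1 ∨ ξ n ω = -1)
    (hηv : ∀ n ω, η n ω = 1 ∨ η n ω = -1)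
    (hhalf : ∀ n, 1 ≤ n →
      (P[({ω | ξ n ω = 1}).indicator (fun _ => (1 : ℝ)) | F (n - 1)] =ᵐ[P] fun _ => 1 / 2) ∧
      (P[({ω | ξ n ω = -1}).indicator (fun _ => (1 : ℝ)) | F (n - 1)] =ᵐ[P] fun _ => 1 / 2) ∧
      (P[({ω | η n ω = 1}).indicator (fun _ => (1 : ℝ)) | F (n - 1)] =ᵐ[P] fun _ => 1 / 2) ∧
      (P[({ω | η n ω = -1}).indicator (fun _ => (1 : ℝ)) | F (n - 1)] =ᵐ[P] fun _ => 1 / 2))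
    (ζ ψ : ℕ → Ω → ℝ)
    (hζm : ∀ n, Measurable (ζ n)) (hψm : ∀ n, Measurable (ψ n))
    (hζd : ∀ n, P {ω | ζ n ω = 1} = 2⁻¹ ∧ P {ω | ζ n ω = -1} = 2⁻¹)
    (hψd : ∀ n, P {ω | ψ n ω = 1} = 2⁻¹ ∧ P {ω | ψ n ω = -1} = 2⁻¹)
    (hindep : iIndep (fun i : ℕ ⊕ ℕ ⊕ Unit =>
      Sum.elim (fun n => MeasurableSpace.comap (ζ n) inferInstance)
        (Sum.elim (fun n => MeasurableSpace.comap (ψ n) inferInstance)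
          (fun _ => ⨆ n, (F n : MeasurableSpace Ω))) i) P) :
    ∀ (k l : ℕ) (nn : Fin k → ℕ) (mm : Fin l → ℕ),
      (∀ i, 1 ≤ nn i) → (∀ j, 1 ≤ mm j) →
      Function.Injective nn → Function.Injective mm →
      ∀ (x : Fin k → ℝ) (y : Fin l → ℝ),
        (∀ i, x i = 1 ∨ x i = -1) → (∀ j, y j = 1 ∨ y j = -1) →
        P ({ω | ∀ i, xiAlpha ξ η ζ (nn i) ω = x i} ∩ {ω | ∀ j, xiBeta ξ η ψ (mm j) ω = y j})
          = 2⁻¹ ^ (k + l) := by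
  intro k l nn mm hnn1 hmm1 hnninj hmminj x y hx hy
  classical
  set AP : Finset (Fin k) → Set Ω := patSet (Tproc ξ η) ξ nn x with hAP_def
  set BP : Finset (Fin l) → Set Ω := patSet (Sproc ξ η) ξ mm y with hBP_def
  set xv : ℕ → ℝ := fun n => if h : ∃ i, nn i = n then x h.choose else 1 with hxv_def
  set yv : ℕ → ℝ := fun n => if h : ∃ j, mm j = n then y h.choose else 1 with hyv_def
  set u : ℕ → Set Ω := fun n => {ω | ζ n ω = xv n} with hu_def
  set v : ℕ → Set Ω := fun n => {ω | ψ n ω = yv n} with hv_def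
  have hxv : ∀ i, xv (nn i) = x i := by
    intro i
    have hex : ∃ i', nn i' = nn i := ⟨i, rfl⟩
    simp only [hxv_def]
    rw [dif_pos hex, hnninj hex.choose_spec]
  have hyv : ∀ j, yv (mm j) = y j := by
    intro j
    have hex : ∃ j', mm j' = mm j := ⟨j, rfl⟩
    simp only [hyv_def]
    rw [dif_pos hex, hmminj hex.choose_spec]
  have hu_meas : ∀ n, MeasurableSet[MeasurableSpace.comap (ζ n) inferInstance] (u n) :=
    fun n => ⟨{xv n}, measurableSet_singleton _, rfl⟩
  have hv_meas : ∀ n, MeasurableSet[MeasurableSpace.comap (ψ n) inferInstance] (v n) :=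
    fun n => ⟨{yv n}, measurableSet_singleton _, rfl⟩
  have hu_prob : ∀ i, P (u (nn i)) = 2⁻¹ := by
    intro i
    have huv : u (nn i) = {ω | ζ (nn i) ω = x i} := by
      simp only [hu_def, hxv i]
    rw [huv]
    rcases hx i with hxi | hxi <;> rw [hxi]
    · exact (hζd (nn i)).1
    · exact (hζd (nn i)).2
  have hv_prob : ∀ j, P (v (mm j)) = 2⁻¹ := by
    intro j
    have hvv : v (mm j) = {ω | ψ (mm j) ω = y j} := by
      simp only [hv_def, hyv j]
    rw [hvv]
    rcases hy j with hyj | hyj <;> rw [hyj]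
    · exact (hψd (mm j)).1
    · exact (hψd (mm j)).2
  set term : Finset (Fin k) × Finset (Fin l) → Set Ω := fun p =>
    (AP p.1 ∩ BP p.2) ∩ ((⋂ n ∈ p.1.image nn, u n) ∩ (⋂ n ∈ p.2.image mm, v n)) with hterm_def
  -- decomposition of the event
  have hE : {ω | ∀ i, xiAlpha ξ η ζ (nn i) ω = x i} ∩ {ω | ∀ j, xiBeta ξ η ψ (mm j) ω = y j}
      = ⋃ p ∈ (Finset.univ : Finset (Finset (Fin k) × Finset (Fin l))), term p := by
    ext ω
    simp only [mem_inter_iff, mem_setOf_eq, Set.mem_iUnion, exists_prop]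
    constructor
    · rintro ⟨hA, hB⟩
      set I₀ : Finset (Fin k) :=
        Finset.univ.filter (fun i => ¬∃ t, nn i ≤ Tproc ξ η t ω) with hI₀
      set J₀ : Finset (Fin l) :=
        Finset.univ.filter (fun j => ¬∃ t, mm j ≤ Sproc ξ η t ω) with hJ₀
      have hmemI : ∀ i, i ∈ I₀ ↔ ¬∃ t, nn i ≤ Tproc ξ η t ω := by intro i; simp [hI₀]
      have hmemJ : ∀ j, j ∈ J₀ ↔ ¬∃ t, mm j ≤ Sproc ξ η t ω := by intro j; simp [hJ₀]
      refine ⟨(I₀, J₀), Finset.mem_univ _, ⟨⟨?_, ?_⟩, ?_, ?_⟩⟩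
      · intro i
        refine ⟨fun hi => (hmemI i).mp hi, fun hi => ?_⟩
        have hfin : ∃ t, nn i ≤ Tproc ξ η t ω := by
          by_contra hc; exact hi ((hmemI i).mpr hc)
        exact ⟨hfin, by rw [← xiAlpha_of_fin (ζ := ζ) (hnn1 i) hfin]; exact hA i⟩
      · intro j
        refine ⟨fun hj => (hmemJ j).mp hj, fun hj => ?_⟩
        have hfin : ∃ t, mm j ≤ Sproc ξ η t ω := by
          by_contra hc; exact hj ((hmemJ j).mpr hc)
        exact ⟨hfin, by rw [← xiBeta_of_fin (ψ := ψ) (hmm1 j) hfin]; exact hB j⟩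
      · refine Set.mem_iInter₂.mpr fun n hn => ?_
        obtain ⟨i, hiI, rfl⟩ := Finset.mem_image.mp hn
        show ζ (nn i) ω = xv (nn i)
        rw [hxv i, ← xiAlpha_of_inf (ζ := ζ) (hnn1 i) ((hmemI i).mp hiI)]
        exact hA i
      · refine Set.mem_iInter₂.mpr fun n hn => ?_
        obtain ⟨j, hjJ, rfl⟩ := Finset.mem_image.mp hn
        show ψ (mm j) ω = yv (mm j)
        rw [hyv j, ← xiBeta_of_inf (ψ := ψ) (hmm1 j) ((hmemJ j).mp hjJ)]
        exact hB j
    · rintro ⟨p, -, hp⟩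
      obtain ⟨⟨hpatT, hpatS⟩, hZ, hW⟩ := hp
      constructor
      · intro i
        by_cases hi : i ∈ p.1
        · rw [xiAlpha_of_inf (ζ := ζ) (hnn1 i) ((hpatT i).1 hi)]
          have hmem := Set.mem_iInter₂.mp hZ (nn i) (Finset.mem_image_of_mem nn hi)
          rw [show ζ (nn i) ω = xv (nn i) from hmem, hxv i]
        · obtain ⟨hfin, hval⟩ := (hpatT i).2 hi
          rw [xiAlpha_of_fin (ζ := ζ) (hnn1 i) hfin]
          exact hval
      · intro j
        by_cases hj : j ∈ p.2
        · rw [xiBeta_of_inf (ψ := ψ) (hmm1 j) ((hpatS j).1 hj)]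
          have hmem := Set.mem_iInter₂.mp hW (mm j) (Finset.mem_image_of_mem mm hj)
          rw [show ψ (mm j) ω = yv (mm j) from hmem, hyv j]
        · obtain ⟨hfin, hval⟩ := (hpatS j).2 hj
          rw [xiBeta_of_fin (ψ := ψ) (hmm1 j) hfin]
          exact hval
  rw [hE]
  have hsuple : (⨆ i, (F i : MeasurableSpace Ω)) ≤ mΩ := iSup_le fun i => F.le i
  have hTmeas : ∀ s, Measurable[F s] (Tproc ξ η s) := measurable_Tproc hξm hηm
  have hSmeas : ∀ s, Measurable[F s] (Sproc ξ η s) := measurable_Sproc hξm hηm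
  have hAPm : ∀ I, MeasurableSet[⨆ i, (F i : MeasurableSpace Ω)] (AP I) := fun I =>
    measurableSet_patSet (Tproc_zero ξ η) hTmeas hξm hnn1 I
  have hBPm : ∀ J, MeasurableSet[⨆ i, (F i : MeasurableSpace Ω)] (BP J) := fun J =>
    measurableSet_patSet (Sproc_zero ξ η) hSmeas hξm hmm1 J
  have hterm_meas : ∀ p ∈ (Finset.univ : Finset (Finset (Fin k) × Finset (Fin l))),
      MeasurableSet (term p) := by
    intro p _
    refine MeasurableSet.inter (hsuple _ ((hAPm p.1).inter (hBPm p.2)))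
      (MeasurableSet.inter ?_ ?_)
    · exact Finset.measurableSet_biInter _ fun n _ => hζm n (measurableSet_singleton _)
    · exact Finset.measurableSet_biInter _ fun n _ => hψm n (measurableSet_singleton _)
  have hdisj : Set.PairwiseDisjoint
      (↑(Finset.univ : Finset (Finset (Fin k) × Finset (Fin l)))) term := by
    intro p _ q _ hpq
    refine Set.disjoint_left.mpr fun {ω} hωp hωq => hpq ?_
    obtain ⟨⟨h1, h2⟩, -⟩ := hωp
    obtain ⟨⟨h3, h4⟩, -⟩ := hωq
    exact Prod.ext (patSet_unique h1 h3) (patSet_unique h2 h4)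
  rw [measure_biUnion_finset hdisj hterm_meas]
  have hterm_val : ∀ p : Finset (Fin k) × Finset (Fin l),
      P (term p) = P (AP p.1 ∩ BP p.2) * ((2:ℝ≥0∞)⁻¹ ^ p.1.card * 2⁻¹ ^ p.2.card) := by
    intro p
    have hglue := indep_glue P F ζ ψ hindep u v hu_meas hv_meas
      ((hAPm p.1).inter (hBPm p.2)) (p.1.image nn) (p.2.image mm)
    have hPu : ∏ n ∈ p.1.image nn, P (u n) = (2:ℝ≥0∞)⁻¹ ^ p.1.card := by
      rw [Finset.prod_image (fun a _ b _ h => hnninj h),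
        Finset.prod_congr rfl (fun i _ => hu_prob i), Finset.prod_const]
    have hPv : ∏ n ∈ p.2.image mm, P (v n) = (2:ℝ≥0∞)⁻¹ ^ p.2.card := by
      rw [Finset.prod_image (fun a _ b _ h => hmminj h),
        Finset.prod_congr rfl (fun j _ => hv_prob j), Finset.prod_const]
    rw [hterm_def]
    rw [hglue, hPu, hPv]
  rw [Finset.sum_congr rfl (fun p _ => hterm_val p)]
  -- final arithmetic via `toReal`
  have hsum := sum_PD_one P F ξ η hξm hηm hξv hηv hhalf hnn1 hmm1 hnninj hmminj hx hy
  have hsum' : ∑ p ∈ (Finset.univ : Finset (Finset (Fin k) × Finset (Fin l))),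
      ((2:ℝ) ^ (k - p.1.card) * 2 ^ (l - p.2.card)) * (P (AP p.1 ∩ BP p.2)).toReal = 1 := by
    rw [← Finset.univ_product_univ, Finset.sum_product]
    exact hsum
  have hfinpt : ∀ p : Finset (Fin k) × Finset (Fin l),
      P (AP p.1 ∩ BP p.2) * ((2:ℝ≥0∞)⁻¹ ^ p.1.card * 2⁻¹ ^ p.2.card) ≠ ⊤ := by
    intro p
    refine ENNReal.mul_ne_top (measure_ne_top P _) (ENNReal.mul_ne_top ?_ ?_) <;>
      · refine ENNReal.pow_ne_top ?_
        simp
  have hL : (∑ p ∈ (Finset.univ : Finset (Finset (Fin k) × Finset (Fin l))),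
      P (AP p.1 ∩ BP p.2) * ((2:ℝ≥0∞)⁻¹ ^ p.1.card * 2⁻¹ ^ p.2.card)).toReal
      = ∑ p ∈ (Finset.univ : Finset (Finset (Fin k) × Finset (Fin l))),
          (P (AP p.1 ∩ BP p.2)).toReal * ((2:ℝ)⁻¹ ^ p.1.card * (2:ℝ)⁻¹ ^ p.2.card) := by
    rw [ENNReal.toReal_sum (fun p _ => hfinpt p)]
    refine Finset.sum_congr rfl fun p _ => ?_
    rw [ENNReal.toReal_mul, ENNReal.toReal_mul, ENNReal.toReal_pow, ENNReal.toReal_pow]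
    norm_num
  have hR : ∑ p ∈ (Finset.univ : Finset (Finset (Fin k) × Finset (Fin l))),
      (P (AP p.1 ∩ BP p.2)).toReal * ((2:ℝ)⁻¹ ^ p.1.card * (2:ℝ)⁻¹ ^ p.2.card)
      = (2:ℝ)⁻¹ ^ (k + l) := by
    have hterm_eq : ∀ p : Finset (Fin k) × Finset (Fin l),
        (P (AP p.1 ∩ BP p.2)).toReal * ((2:ℝ)⁻¹ ^ p.1.card * (2:ℝ)⁻¹ ^ p.2.card)
        = (2:ℝ)⁻¹ ^ (k + l)
          * (((2:ℝ) ^ (k - p.1.card) * 2 ^ (l - p.2.card)) * (P (AP p.1 ∩ BP p.2)).toReal) := by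
      intro p
      have hcI : p.1.card ≤ k := le_trans (Finset.card_le_univ p.1) (by simp)
      have hcJ : p.2.card ≤ l := le_trans (Finset.card_le_univ p.2) (by simp)
      have key : (2:ℝ)⁻¹ ^ p.1.card * (2:ℝ)⁻¹ ^ p.2.card
          = (2:ℝ)⁻¹ ^ (k + l) * ((2:ℝ) ^ (k - p.1.card) * 2 ^ (l - p.2.card)) := by
        have h1 : (2:ℝ) ^ (k - p.1.card) * 2 ^ (l - p.2.card)
            = 2 ^ ((k + l) - (p.1.card + p.2.card)) := by
          rw [← pow_add]; congr 1; omega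
        have h2 : (2:ℝ)⁻¹ ^ (k + l)
            = 2⁻¹ ^ (p.1.card + p.2.card) * 2⁻¹ ^ ((k + l) - (p.1.card + p.2.card)) := by
          rw [← pow_add]; congr 1; omega
        rw [h1, h2, ← pow_add, mul_assoc, ← mul_pow]
        norm_num
      calc (P (AP p.1 ∩ BP p.2)).toReal * ((2:ℝ)⁻¹ ^ p.1.card * (2:ℝ)⁻¹ ^ p.2.card)
          = (P (AP p.1 ∩ BP p.2)).toReal
            * ((2:ℝ)⁻¹ ^ (k + l) * ((2:ℝ) ^ (k - p.1.card) * 2 ^ (l - p.2.card))) := by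
            rw [key]
        _ = (2:ℝ)⁻¹ ^ (k + l)
            * (((2:ℝ) ^ (k - p.1.card) * 2 ^ (l - p.2.card))
              * (P (AP p.1 ∩ BP p.2)).toReal) := by ring
    rw [Finset.sum_congr rfl (fun p _ => hterm_eq p), ← Finset.mul_sum, hsum', mul_one]
  have hLR : (∑ p ∈ (Finset.univ : Finset (Finset (Fin k) × Finset (Fin l))),
      P (AP p.1 ∩ BP p.2) * ((2:ℝ≥0∞)⁻¹ ^ p.1.card * 2⁻¹ ^ p.2.card)).toReal
      = ((2:ℝ≥0∞)⁻¹ ^ (k + l)).toReal := by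
    rw [hL, hR, ENNReal.toReal_pow]
    norm_num
  refine (ENNReal.toReal_eq_toReal_iff' ?_ ?_).mp hLR
  · exact ENNReal.sum_ne_top.mpr (fun p _ => hfinpt p)
  · exact ENNReal.pow_ne_top (by simp)
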